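/- arXiv:0910.5430 — 5 statements merged into one kernel-verified Lean document; each statement's English description precedes it below -/
import Mathlib

section
/- Let A and R be commutative unital topological rings, let ε : A → R be a ring homomorphism such that every element of the kernel of ε is nilpotent, and let η : R → A be a continuous ring homomorphism with ε ∘ η = id_R. If the set of invertible elements of R is dense in R, then the set of invertible elements of A is dense in A. -/
/-- **(Lemma 2.2, abstract form.)** Let `A` and `R` be commutative unital topological rings,
`ε : A → R` a ring homomorphism whose kernel consists of nilpotent elements, and
`η : R → A` a continuous ring homomorphism with `ε ∘ η = id`. If the units of `R` are dense
in `R`, then the units of `A` are dense in `A`. -/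
theorem dense_units_of_section (A R : Type*)
    [CommRing A] [TopologicalSpace A] [IsTopologicalRing A]
    [CommRing R] [TopologicalSpace R] [IsTopologicalRing R]
    (ε : A →+* R) (η : R →+* A) (hη : Continuous η)
    (hker : ∀ a ∈ RingHom.ker ε, IsNilpotent a)
    (hsec : ε.comp η = RingHom.id R)
    (hdense : Dense {r : R | IsUnit r}) :
    Dense {a : A | IsUnit a} := by
  rw [dense_iff_inter_open] at hdense ⊢
  rintro U hU ⟨a, ha⟩
  set n := a - η (ε a) with hn_def
  have hn : IsNilpotent n := hker _ (by
    rw [RingHom.mem_ker, hn_def, map_sub]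
    have : ε (η (ε a)) = ε a := RingHom.congr_fun hsec (ε a)
    rw [this, sub_self])
  have hf : Continuous fun r : R => η r + n := (hη.add continuous_const)
  obtain ⟨u, huU, huUnit⟩ := hdense ((fun r : R => η r + n) ⁻¹' U) (hU.preimage hf)
    ⟨ε a, by simp [hn_def, ha]⟩
  exact ⟨η u + n, huU, hn.isUnit_add_left_of_commute (huUnit.map η) (Commute.all _ _)⟩
end

section
/- Let x₀ ∈ ℝ^m and N ∈ ℕ. Every ℝ-algebra homomorphism a : C^∞_{x₀} → λ_N from the ring of germs at x₀ of smooth real-valued functions to the Grassmann algebra λ_N satisfies ε(a(f)) = f(x₀) for every germ f, where ε : λ_N → ℝ is the augmentation. -/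
open Filter Topology

/-- The canonical `ℝ`-algebra structure on the ring of germs of `A`-valued functions,
where `A` is an `ℝ`-algebra. -/
noncomputable instance Filter.Germ.instAlgebraReal {α : Type*} (l : Filter α) (A : Type*)
    [Semiring A] [Algebra ℝ A] : Algebra ℝ (Filter.Germ l A) :=
  Algebra.ofModule
    (fun r x y => x.inductionOn fun f => y.inductionOn fun g => by
      rw [← Filter.Germ.coe_smul, ← Filter.Germ.coe_mul, ← Filter.Germ.coe_mul,
        ← Filter.Germ.coe_smul]
      exact congrArg _ (funext fun z => smul_mul_assoc r (f z) (g z)))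
    (fun r x y => x.inductionOn fun f => y.inductionOn fun g => by
      rw [← Filter.Germ.coe_smul, ← Filter.Germ.coe_mul, ← Filter.Germ.coe_mul,
        ← Filter.Germ.coe_smul]
      exact congrArg _ (funext fun z => mul_smul_comm r (f z) (g z)))

/-- `C^∞_x`: the `ℝ`-algebra of germs at `x` of smooth (`C^∞`) real-valued functions
defined on open neighbourhoods of `x` in `ℝ^n`. -/
noncomputable def SmoothGermAt (n : ℕ) (x : Fin n → ℝ) :
    Subalgebra ℝ (Filter.Germ (𝓝 x) ℝ) where
  carrier := {φ | ∃ f : (Fin n → ℝ) → ℝ,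
    (∃ U : Set (Fin n → ℝ), IsOpen U ∧ x ∈ U ∧ ContDiffOn ℝ (⊤ : ℕ∞) f U) ∧ φ = ↑f}
  mul_mem' := by
    rintro φ ψ ⟨f, ⟨U, hU, hxU, hf⟩, rfl⟩ ⟨g, ⟨V, hV, hxV, hg⟩, rfl⟩
    exact ⟨f * g, ⟨U ∩ V, hU.inter hV, ⟨hxU, hxV⟩,
      (hf.mono Set.inter_subset_left).mul (hg.mono Set.inter_subset_right)⟩,
      (Filter.Germ.coe_mul f g).symm ▸ rfl⟩
  add_mem' := by
    rintro φ ψ ⟨f, ⟨U, hU, hxU, hf⟩, rfl⟩ ⟨g, ⟨V, hV, hxV, hg⟩, rfl⟩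
    exact ⟨f + g, ⟨U ∩ V, hU.inter hV, ⟨hxU, hxV⟩,
      (hf.mono Set.inter_subset_left).add (hg.mono Set.inter_subset_right)⟩,
      (Filter.Germ.coe_add f g).symm ▸ rfl⟩
  algebraMap_mem' := by
    intro c
    refine ⟨fun _ => c, ⟨Set.univ, isOpen_univ, trivial, contDiffOn_const⟩, ?_⟩
    show c • (1 : Filter.Germ (𝓝 x) ℝ) = _
    rw [show (1 : Filter.Germ (𝓝 x) ℝ) = ((fun _ => (1:ℝ)) : (Fin n → ℝ) → ℝ) from rfl,
      ← Filter.Germ.coe_smul]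
    exact congrArg _ (funext fun z => by simp [smul_eq_mul])

/-- Evaluation of a smooth germ at its base point, as a ring homomorphism. -/
noncomputable def SmoothGermAt.evalHom (n : ℕ) (x : Fin n → ℝ) :
    SmoothGermAt n x →+* ℝ :=
  (Filter.Germ.valueRingHom).comp (Subalgebra.val _).toRingHom

/-- The maximal ideal `m_x` of germs vanishing at `x`. -/
noncomputable def SmoothGermAt.mIdeal (n : ℕ) (x : Fin n → ℝ) :
    Ideal (SmoothGermAt n x) :=
  RingHom.ker (SmoothGermAt.evalHom n x)


theorem SmoothGermAt.isUnit_of_value_ne_zero {m : ℕ} {x₀ : Fin m → ℝ}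
    (f : SmoothGermAt m x₀)
    (hf : Filter.Germ.value (f : Filter.Germ (𝓝 x₀) ℝ) ≠ 0) : IsUnit f := by
  obtain ⟨h, ⟨U, hU, hxU, hsm⟩, hfh⟩ := f.2
  have hval : Filter.Germ.value (f : Filter.Germ (𝓝 x₀) ℝ) = h x₀ := by rw [hfh]; rfl
  have hx0 : h x₀ ≠ 0 := hval ▸ hf
  set V : Set (Fin m → ℝ) := U ∩ h ⁻¹' {0}ᶜ with hVdef
  have hVopen : IsOpen V := hsm.continuousOn.isOpen_inter_preimage hU isOpen_compl_singleton
  have hxV : x₀ ∈ V := ⟨hxU, hx0⟩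
  have hne : ∀ z ∈ V, h z ≠ 0 := fun z hz => hz.2
  have hginv : ContDiffOn ℝ (⊤ : ℕ∞) (fun z => (h z)⁻¹) V :=
    (hsm.mono Set.inter_subset_left).inv hne
  refine IsUnit.of_mul_eq_one (a := f) ⟨(↑(fun z => (h z)⁻¹ : (Fin m → ℝ) → ℝ) :
    Filter.Germ (𝓝 x₀) ℝ), ⟨fun z => (h z)⁻¹, ⟨V, hVopen, hxV, hginv⟩, rfl⟩⟩ ?_
  apply Subtype.ext
  show (f : Filter.Germ (𝓝 x₀) ℝ) * ↑(fun z => (h z)⁻¹ : (Fin m → ℝ) → ℝ) = 1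
  rw [hfh, ← Filter.Germ.coe_mul]
  refine Filter.Germ.coe_eq.mpr ?_
  filter_upwards [hVopen.mem_nhds hxV] with z hz
  exact mul_inv_cancel₀ (hne z hz)

theorem algHom_smoothGermAt_to_real_eq_value (m : ℕ) (x₀ : Fin m → ℝ)
    (φ : SmoothGermAt m x₀ →ₐ[ℝ] ℝ) (f : SmoothGermAt m x₀) :
    φ f = Filter.Germ.value (f : Filter.Germ (𝓝 x₀) ℝ) := by
  by_contra hne
  set u : SmoothGermAt m x₀ := f - algebraMap ℝ _ (φ f) with hu
  have hcoe : (u : Filter.Germ (𝓝 x₀) ℝ)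
      = (f : Filter.Germ (𝓝 x₀) ℝ) - algebraMap ℝ _ (φ f) := by
    simp [hu, Subalgebra.coe_algebraMap]
  have hvalalg : Filter.Germ.value ((algebraMap ℝ (Filter.Germ (𝓝 x₀) ℝ)) (φ f)) = φ f := by
    have : (algebraMap ℝ (Filter.Germ (𝓝 x₀) ℝ)) (φ f)
        = (↑(fun _ => φ f : (Fin m → ℝ) → ℝ) : Filter.Germ (𝓝 x₀) ℝ) := by
      rw [Algebra.algebraMap_eq_smul_one]
      rw [show (1 : Filter.Germ (𝓝 x₀) ℝ) = ((fun _ => (1:ℝ)) : (Fin m → ℝ) → ℝ) from rfl,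
        ← Filter.Germ.coe_smul]
      exact congrArg _ (funext fun z => by simp)
    rw [this]; rfl
  have hval : Filter.Germ.value (u : Filter.Germ (𝓝 x₀) ℝ) ≠ 0 := by
    have hsub : ∀ p q : Filter.Germ (𝓝 x₀) ℝ,
        Filter.Germ.value (p - q) = Filter.Germ.value p - Filter.Germ.value q :=
      fun p q => map_sub Filter.Germ.valueRingHom p q
    rw [hcoe, hsub, hvalalg]
    intro hc
    exact hne (by linarith [sub_eq_zero.mp hc])
  have hunit : IsUnit u := SmoothGermAt.isUnit_of_value_ne_zero u hval
  have hz : φ u = 0 := by simp [hu]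
  have h0 : IsUnit (0 : ℝ) := by rw [← hz]; exact hunit.map φ
  simp at h0

/-- **(Part of the proof of Lemma 3.11.)** For every `ℝ`-algebra homomorphism `a` from the
algebra `C^∞_{x₀}` of germs at `x₀ ∈ ℝ^m` of smooth real-valued functions to the Grassmann
algebra `λ_N = ExteriorAlgebra ℝ (Fin N → ℝ)`, one has `ε (a f) = f (x₀)` for every germ `f`,
where `ε` is the augmentation `ExteriorAlgebra.algebraMapInv`. -/
theorem augmentation_algHom_smoothGermAt_eq_value (m N : ℕ) (x₀ : Fin m → ℝ)
    (a : SmoothGermAt m x₀ →ₐ[ℝ] ExteriorAlgebra ℝ (Fin N → ℝ))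
    (f : SmoothGermAt m x₀) :
    ExteriorAlgebra.algebraMapInv (a f) =
      Filter.Germ.value (f : Filter.Germ (𝓝 x₀) ℝ) := by
  exact algHom_smoothGermAt_to_real_eq_value m x₀ ((ExteriorAlgebra.algebraMapInv).comp a) f
end

section
/- Let x₀ ∈ ℝ^m and N ∈ ℕ. If a, b : C^∞_{x₀} → λ_N are two ℝ-algebra homomorphisms from the ring of germs at x₀ of smooth real-valued functions to the Grassmann algebra λ_N which agree on the germs at x₀ of the m coordinate functions y ↦ y_i (i = 1, …, m), then a = b. -/
open Filter Topology

/-- The germ at `x₀` of the `i`-th coordinate function `y ↦ y i`, as an element of `C^∞_{x₀}`. -/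
noncomputable def coordFunGermAt (m : ℕ) (x₀ : Fin m → ℝ) (i : Fin m) : SmoothGermAt m x₀ :=
  ⟨(↑(fun y : Fin m → ℝ => y i) : Filter.Germ (𝓝 x₀) ℝ),
    ⟨fun y => y i, ⟨Set.univ, isOpen_univ, trivial,
      (ContinuousLinearMap.proj (R := ℝ) (φ := fun _ : Fin m => ℝ) i).contDiff.contDiffOn⟩,
      rfl⟩⟩


set_option maxHeartbeats 1000000
set_option synthInstance.maxHeartbeats 400000

open ExteriorAlgebra

section ExtAlg

variable (N : ℕ)

private noncomputable abbrev ee (i : Fin N) : Fin N → ℝ := Pi.single i (1:ℝ)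

private lemma iota_swap {N : ℕ} (v w : Fin N → ℝ) : ι ℝ v * ι ℝ w = -(ι ℝ w * ι ℝ v) :=
  eq_neg_of_add_eq_zero_left (ι_add_mul_swap v w)

private lemma iota_mul_prod_eq_zero {N : ℕ} (v : Fin N → ℝ) :
    ∀ (l : List (Fin N → ℝ)), v ∈ l → ι ℝ v * (l.map (ι ℝ)).prod = 0 := by
  intro l
  induction l with
  | nil => simp
  | cons w t ih =>
    intro hv
    rcases List.mem_cons.mp hv with rfl | hv
    · rw [List.map_cons, List.prod_cons, ← mul_assoc, ι_sq_zero, zero_mul]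
    · rw [List.map_cons, List.prod_cons, ← mul_assoc, iota_swap, neg_mul, mul_assoc,
        ih hv, mul_zero, neg_zero]

private lemma prod_eq_zero_of_not_nodup {N : ℕ} :
    ∀ (l : List (Fin N → ℝ)), ¬ l.Nodup → (l.map (ι ℝ)).prod = 0 := by
  intro l
  induction l with
  | nil => intro h; exact absurd List.nodup_nil h
  | cons w t ih =>
    intro h
    rw [List.nodup_cons] at h
    push_neg at h
    rw [List.map_cons, List.prod_cons]
    by_cases hw : w ∈ t
    · exact iota_mul_prod_eq_zero w t hw
    · rw [ih (h hw), mul_zero]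

private lemma prod_mem_span_basis {N : ℕ} :
    ∀ (l : List (Fin N → ℝ)), (l.map (ι ℝ)).prod ∈ Submodule.span ℝ
      {y : ExteriorAlgebra ℝ (Fin N → ℝ) | ∃ l' : List (Fin N), l'.length = l.length ∧
        y = ((l'.map (ee N)).map (ι ℝ)).prod} := by
  intro l
  induction l with
  | nil =>
    exact Submodule.subset_span ⟨[], rfl, by simp⟩
  | cons v t ih =>
    rw [List.map_cons, List.prod_cons]
    have hv2 : v = ∑ i, v i • ee N i := by
      ext j
      simp [ee, Pi.single_apply]
    have hv : ι ℝ v = ∑ i, v i • ι ℝ (ee N i) := by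
      conv_lhs => rw [hv2]
      rw [map_sum]
      exact Finset.sum_congr rfl fun i _ => by rw [map_smul]
    rw [hv, Finset.sum_mul]
    refine Submodule.sum_mem _ fun i _ => ?_
    rw [smul_mul_assoc]
    refine Submodule.smul_mem _ _ ?_
    refine Submodule.span_induction (p := fun x _ => ι ℝ (ee N i) * x ∈
      Submodule.span ℝ {y : ExteriorAlgebra ℝ (Fin N → ℝ) |
        ∃ l' : List (Fin N), l'.length = (v :: t).length ∧
        y = ((l'.map (ee N)).map (ι ℝ)).prod}) ?_ ?_ ?_ ?_ ih
    · rintro x ⟨l', hlen, rfl⟩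
      refine Submodule.subset_span ⟨i :: l', by simp [hlen], ?_⟩
      simp
    · simp
    · intro x y _ _ hx hy; rw [mul_add]; exact Submodule.add_mem _ hx hy
    · intro r x _ hx; rw [mul_smul_comm]; exact Submodule.smul_mem _ _ hx

private lemma basis_prod_eq_zero {N : ℕ} (l' : List (Fin N)) (hl : l'.length = N + 1) :
    ((l'.map (ee N)).map (ι ℝ)).prod = (0 : ExteriorAlgebra ℝ (Fin N → ℝ)) := by
  apply prod_eq_zero_of_not_nodup
  intro hnd
  have h1 : l'.Nodup := hnd.of_map _
  have h2 := h1.length_le_card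
  simp [hl] at h2

noncomputable def Wsub : Submodule ℝ (ExteriorAlgebra ℝ (Fin N → ℝ)) :=
  LinearMap.range (ι ℝ : (Fin N → ℝ) →ₗ[ℝ] ExteriorAlgebra ℝ (Fin N → ℝ))

lemma Wpow_eq_bot : (Wsub N) ^ (N + 1) = ⊥ := by
  rw [eq_bot_iff]
  intro x hx
  have key : x ∈ Submodule.span ℝ {y : ExteriorAlgebra ℝ (Fin N → ℝ) |
      ∃ l : List (Fin N → ℝ), l.length = N + 1 ∧ y = (l.map (ι ℝ)).prod} := by
    refine Submodule.pow_induction_on_left'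
      (M := Wsub N) (C := fun n x _ => x ∈ Submodule.span ℝ
        {y : ExteriorAlgebra ℝ (Fin N → ℝ) | ∃ l : List (Fin N → ℝ),
        l.length = n ∧ y = (l.map (ι ℝ)).prod}) ?_ ?_ ?_ hx
    · intro r
      rw [Algebra.algebraMap_eq_smul_one]
      refine Submodule.smul_mem _ _ (Submodule.subset_span ⟨[], rfl, by simp⟩)
    · intro x y i _ _ hx hy; exact Submodule.add_mem _ hx hy
    · rintro m ⟨v, rfl⟩ i x _ hx
      refine Submodule.span_induction (p := fun z _ => ι ℝ v * z ∈
        Submodule.span ℝ {y : ExteriorAlgebra ℝ (Fin N → ℝ) | ∃ l : List (Fin N → ℝ),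
          l.length = i + 1 ∧ y = (l.map (ι ℝ)).prod}) ?_ ?_ ?_ ?_ hx
      · rintro z ⟨l, hlen, rfl⟩
        exact Submodule.subset_span ⟨v :: l, by simp [hlen], by simp⟩
      · simp
      · intro z w _ _ hz hw; rw [mul_add]; exact Submodule.add_mem _ hz hw
      · intro r z _ hz; rw [mul_smul_comm]; exact Submodule.smul_mem _ _ hz
  refine Submodule.span_le.mpr ?_ key
  rintro y ⟨l, hlen, rfl⟩
  have h1 := prod_mem_span_basis l
  have h2 : {y : ExteriorAlgebra ℝ (Fin N → ℝ) | ∃ l' : List (Fin N),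
      l'.length = l.length ∧ y = ((l'.map (ee N)).map (ι ℝ)).prod} ⊆ {0} := by
    rintro z ⟨l', hl', rfl⟩
    exact basis_prod_eq_zero l' (hl'.trans hlen)
  have h3 := Submodule.span_le.mpr (h2.trans
    (by simp : ({0} : Set (ExteriorAlgebra ℝ (Fin N → ℝ))) ⊆
      (⊥ : Submodule ℝ (ExteriorAlgebra ℝ (Fin N → ℝ)))))
  exact h3 h1

/-- `W^k * ⊤` is a left ideal. -/
lemma mul_mem_WkTop (k : ℕ) (x : ExteriorAlgebra ℝ (Fin N → ℝ)) :
    ∀ (y : ExteriorAlgebra ℝ (Fin N → ℝ)),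
      y ∈ (Wsub N) ^ k * (⊤ : Submodule ℝ (ExteriorAlgebra ℝ (Fin N → ℝ))) →
      x * y ∈ (Wsub N) ^ k * ⊤ := by
  induction x using ExteriorAlgebra.induction with
  | algebraMap r =>
    intro y hy
    rw [← Algebra.smul_def]
    exact Submodule.smul_mem _ _ hy
  | ι v =>
    intro y hy
    have h1 : ι ℝ v * y ∈ Wsub N * ((Wsub N) ^ k * ⊤) :=
      Submodule.mul_mem_mul (LinearMap.mem_range_self _ v) hy
    have h2 : Wsub N * ((Wsub N) ^ k * ⊤) = (Wsub N) ^ k * (Wsub N * ⊤) := by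
      rw [← mul_assoc, ← pow_succ', pow_succ, mul_assoc]
    have h3 : (Wsub N) ^ k * (Wsub N * ⊤) ≤ (Wsub N) ^ k * ⊤ :=
      mul_le_mul' le_rfl le_top
    exact h3 (h2 ▸ h1)
  | mul x₁ x₂ ih₁ ih₂ =>
    intro y hy
    rw [mul_assoc]
    exact ih₁ _ (ih₂ _ hy)
  | add x₁ x₂ ih₁ ih₂ =>
    intro y hy
    rw [add_mul]
    exact Submodule.add_mem _ (ih₁ _ hy) (ih₂ _ hy)

lemma sub_algebraMap_mem_J (x : ExteriorAlgebra ℝ (Fin N → ℝ)) :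
    x - algebraMap ℝ _ (algebraMapInv x) ∈
      (Wsub N) * (⊤ : Submodule ℝ (ExteriorAlgebra ℝ (Fin N → ℝ))) := by
  induction x using ExteriorAlgebra.induction with
  | algebraMap r =>
    rw [algebraMap_leftInverse _ r, sub_self]
    exact Submodule.zero_mem _
  | ι v =>
    have h0 : algebraMapInv (ι ℝ v) = (0 : ℝ) := by
      simp [algebraMapInv]
    rw [h0, map_zero, sub_zero, ← mul_one (ι ℝ v)]
    exact Submodule.mul_mem_mul (LinearMap.mem_range_self _ v) trivial
  | mul x₁ x₂ ih₁ ih₂ =>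
    have key : x₁ * x₂ - algebraMap ℝ _ (algebraMapInv (x₁ * x₂)) =
        x₁ * (x₂ - algebraMap ℝ _ (algebraMapInv x₂)) +
          algebraMapInv x₂ • (x₁ - algebraMap ℝ _ (algebraMapInv x₁)) := by
      rw [map_mul, mul_sub, smul_sub, Algebra.smul_def, Algebra.smul_def,
        Algebra.commutes (algebraMapInv x₂) x₁, ← map_mul, ← map_mul,
        mul_comm (algebraMapInv x₂) (algebraMapInv x₁)]
      noncomm_ring
      rw [map_mul]
    rw [key]
    refine Submodule.add_mem _ ?_ (Submodule.smul_mem _ _ ih₁)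
    have h4 := mul_mem_WkTop N 1 x₁ (x₂ - algebraMap ℝ _ (algebraMapInv x₂))
      (by simpa [pow_one] using ih₂)
    simpa [pow_one] using h4
  | add x₁ x₂ ih₁ ih₂ =>
    rw [map_add, map_add, add_sub_add_comm]
    exact Submodule.add_mem _ ih₁ ih₂

lemma Jpow_le (k : ℕ) :
    ((Wsub N) * (⊤ : Submodule ℝ (ExteriorAlgebra ℝ (Fin N → ℝ)))) ^ k ≤ (Wsub N) ^ k * ⊤ := by
  induction k with
  | zero => rw [pow_zero, pow_zero, Submodule.one_mul]; exact le_top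
  | succ k ih =>
    rw [pow_succ', pow_succ']
    calc (Wsub N * ⊤) * ((Wsub N * ⊤) ^ k) ≤ (Wsub N * ⊤) * ((Wsub N) ^ k * ⊤) :=
          mul_le_mul' le_rfl ih
      _ ≤ Wsub N * ((Wsub N) ^ k * ⊤) := by
          rw [mul_assoc]
          refine mul_le_mul' le_rfl ?_
          rw [Submodule.mul_le]
          intro m _ n hn
          exact mul_mem_WkTop N k m n hn
      _ = (Wsub N) * (Wsub N) ^ k * ⊤ := by rw [mul_assoc]
      _ = _ := by rw [← pow_succ']

lemma Jpow_bot :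
    ((Wsub N) * (⊤ : Submodule ℝ (ExteriorAlgebra ℝ (Fin N → ℝ)))) ^ (N + 1) = ⊥ := by
  rw [eq_bot_iff]
  refine le_trans (Jpow_le N (N + 1)) ?_
  rw [Wpow_eq_bot, Submodule.bot_mul]

end ExtAlg

open Filter Topology MeasureTheory intervalIntegral Metric
open scoped ContDiff

section ParamInt

variable {m : ℕ}

private lemma contDiff_parametric_integral
    {F : Type*} [NormedAddCommGroup F] [NormedSpace ℝ F] [CompleteSpace F]
    (n : ℕ) :
    ∀ (h : ℝ × (Fin m → ℝ) → F), ContDiff ℝ ∞ h →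
      ContDiff ℝ n (fun y : Fin m → ℝ => ∫ t in (0:ℝ)..1, h (t, y)) := by
  induction n generalizing F with
  | zero =>
    intro h hh
    have h0 : ((0:ℕ) : WithTop ℕ∞) = 0 := by norm_cast
    rw [h0, contDiff_zero, continuous_iff_continuousAt]
    intro y₀
    -- dominated convergence on a compact neighbourhood
    have hK : IsCompact ((Set.Icc (0:ℝ) 1) ×ˢ closedBall y₀ 1) :=
      isCompact_Icc.prod (isCompact_closedBall _ _)
    obtain ⟨C, hC⟩ := hK.exists_bound_of_continuousOn hh.continuous.continuousOn
    refine intervalIntegral.continuousAt_of_dominated_interval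
      (bound := fun _ => C) ?_ ?_ ?_ ?_
    · exact Eventually.of_forall fun y =>
        (hh.continuous.comp (continuous_id.prodMk continuous_const)).aestronglyMeasurable
    · filter_upwards [closedBall_mem_nhds y₀ one_pos] with y hy
      refine ae_of_all _ fun t ht => ?_
      have ht' : t ∈ Set.Icc (0:ℝ) 1 := by
        rw [Set.uIoc_of_le (by norm_num : (0:ℝ) ≤ 1)] at ht
        exact Set.mem_Icc_of_Ioc ht
      exact hC (t, y) ⟨ht', hy⟩
    · exact intervalIntegrable_const
    · exact ae_of_all _ fun t _ =>
        (hh.continuous.comp (continuous_const.prodMk continuous_id)).continuousAt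
  | succ n ih =>
    intro h hh
    have hletop : (∞ + 1 : WithTop ℕ∞) ≤ ∞ := by
      exact_mod_cast le_top
    have hle1 : (1 : WithTop ℕ∞) ≤ ∞ := by exact_mod_cast le_top
    -- the partial derivative in the second variable
    set h' : ℝ × (Fin m → ℝ) → ((Fin m → ℝ) →L[ℝ] F) :=
      fun p => (fderiv ℝ h p).comp (ContinuousLinearMap.inr ℝ ℝ (Fin m → ℝ)) with hh'def
    have hfd : ContDiff ℝ ∞ (fun p => fderiv ℝ h p) := hh.fderiv_right hletop
    have hh' : ContDiff ℝ ∞ h' := by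
      exact hfd.clm_comp contDiff_const
    have key : ∀ y₀ : Fin m → ℝ, HasFDerivAt
        (fun y : Fin m → ℝ => ∫ t in (0:ℝ)..1, h (t, y))
        (∫ t in (0:ℝ)..1, h' (t, y₀)) y₀ := by
      intro y₀
      have hK : IsCompact ((Set.Icc (0:ℝ) 1) ×ˢ closedBall y₀ 1) :=
        isCompact_Icc.prod (isCompact_closedBall _ _)
      obtain ⟨C, hC⟩ := hK.exists_bound_of_continuousOn hh'.continuous.continuousOn
      refine intervalIntegral.hasFDerivAt_integral_of_dominated_of_fderiv_le
        (F := fun y t => h (t, y)) (F' := fun y t => h' (t, y)) (bound := fun _ => C)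
        (Metric.ball_mem_nhds y₀ one_pos) ?_ ?_ ?_ ?_ ?_ ?_
      · exact Eventually.of_forall fun y =>
          (hh.continuous.comp (continuous_id.prodMk continuous_const)).aestronglyMeasurable
      · exact ((hh.continuous.comp (continuous_id.prodMk continuous_const))).intervalIntegrable _ _
      · exact (hh'.continuous.comp (continuous_id.prodMk continuous_const)).aestronglyMeasurable
      · refine ae_of_all _ fun t ht y hy => ?_
        have ht' : t ∈ Set.Icc (0:ℝ) 1 := by
          rw [Set.uIoc_of_le (by norm_num : (0:ℝ) ≤ 1)] at ht
          exact Set.mem_Icc_of_Ioc ht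
        exact hC (t, y) ⟨ht', ball_subset_closedBall hy⟩
      · exact intervalIntegrable_const
      · refine ae_of_all _ fun t ht y hy => ?_
        have hdiff : HasFDerivAt h (fderiv ℝ h (t, y)) (t, y) :=
          (hh.differentiable (by simp) (t, y)).hasFDerivAt
        have hline : HasFDerivAt (fun y : Fin m → ℝ => ((t, y) : ℝ × (Fin m → ℝ)))
            (ContinuousLinearMap.inr ℝ ℝ (Fin m → ℝ)) y :=
          hasFDerivAt_prodMk_right t y
        exact hdiff.comp y hline
    have hdiff : Differentiable ℝ (fun y : Fin m → ℝ => ∫ t in (0:ℝ)..1, h (t, y)) :=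
      fun y₀ => (key y₀).differentiableAt
    have hfd_eq : (fderiv ℝ (fun y : Fin m → ℝ => ∫ t in (0:ℝ)..1, h (t, y))) =
        fun y₀ => ∫ t in (0:ℝ)..1, h' (t, y₀) := funext fun y₀ => (key y₀).fderiv
    rw [show ((n + 1 : ℕ) : WithTop ℕ∞) = (n : WithTop ℕ∞) + 1 by norm_cast]
    rw [contDiff_succ_iff_fderiv]
    refine ⟨hdiff, ?_, ?_⟩
    · intro hcontra
      exact absurd hcontra (by simp)
    · rw [hfd_eq]
      exact ih h' hh'

/-- Global Hadamard lemma. -/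
private lemma hadamard_global (f : (Fin m → ℝ) → ℝ) (hf : ContDiff ℝ ∞ f)
    (x₀ : Fin m → ℝ) :
    ∃ g : Fin m → ((Fin m → ℝ) → ℝ), (∀ i, ContDiff ℝ ∞ (g i)) ∧
      ∀ y, f y = f x₀ + ∑ i, (y i - x₀ i) * g i y := by
  classical
  have hletop : (∞ + 1 : WithTop ℕ∞) ≤ ∞ := by exact_mod_cast le_top
  have hle1 : (1 : WithTop ℕ∞) ≤ ∞ := by exact_mod_cast le_top
  set L : ℝ × (Fin m → ℝ) → (Fin m → ℝ) := fun p => x₀ + p.1 • (p.2 - x₀) with hL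
  have hLsm : ContDiff ℝ ∞ L :=
    contDiff_const.add (contDiff_fst.smul (contDiff_snd.sub contDiff_const))
  set h : Fin m → (ℝ × (Fin m → ℝ) → ℝ) :=
    fun i p => (fderiv ℝ f (L p)) (Pi.single i (1:ℝ)) with hhdef
  have hsmooth : ∀ i, ContDiff ℝ ∞ (h i) := by
    intro i
    exact (((hf.fderiv_right hletop).comp hLsm).clm_apply contDiff_const)
  refine ⟨fun i y => ∫ t in (0:ℝ)..1, h i (t, y), ?_, ?_⟩
  · intro i
    rw [contDiff_infty]
    intro n
    exact contDiff_parametric_integral n (h i) (hsmooth i)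
  · intro y
    -- FTC along the segment
    set φ : ℝ → ℝ := fun t => f (x₀ + t • (y - x₀)) with hφ
    have hderiv : ∀ t : ℝ, HasDerivAt φ ((fderiv ℝ f (L (t, y))) (y - x₀)) t := by
      intro t
      have hline : HasDerivAt (fun t : ℝ => x₀ + t • (y - x₀)) (y - x₀) t := by
        have h1 : HasDerivAt (fun t : ℝ => t • (y - x₀)) ((1:ℝ) • (y - x₀)) t :=
          (hasDerivAt_id t).smul_const (y - x₀)
        rw [one_smul] at h1
        exact h1.const_add x₀
      have houter : HasFDerivAt f (fderiv ℝ f (L (t, y))) (x₀ + t • (y - x₀)) :=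
        (hf.differentiable (by simp) _).hasFDerivAt
      exact houter.comp_hasDerivAt t hline
    have hcont : Continuous fun t : ℝ => (fderiv ℝ f (L (t, y))) (y - x₀) := by
      have : Continuous fun t : ℝ => L (t, y) :=
        hLsm.continuous.comp (continuous_id.prodMk continuous_const)
      exact (((hf.fderiv_right hletop).continuous.comp this).clm_apply continuous_const)
    have hFTC : ∫ t in (0:ℝ)..1, (fderiv ℝ f (L (t, y))) (y - x₀) = φ 1 - φ 0 := by
      refine intervalIntegral.integral_eq_sub_of_hasDerivAt
        (fun t _ => hderiv t) (hcont.intervalIntegrable _ _)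
    have hφ1 : φ 1 = f y := by simp [hφ]
    have hφ0 : φ 0 = f x₀ := by simp [hφ]
    have hexp : ∀ t : ℝ, (fderiv ℝ f (L (t, y))) (y - x₀) =
        ∑ i, (y i - x₀ i) * h i (t, y) := by
      intro t
      have hsum : (y - x₀) = ∑ i, (y i - x₀ i) • (Pi.single i (1:ℝ) : Fin m → ℝ) := by
        ext j
        simp [Pi.single_apply]
      rw [hsum, map_sum]
      refine Finset.sum_congr rfl fun i _ => ?_
      rw [_root_.map_smul, smul_eq_mul]
    have hint : ∫ t in (0:ℝ)..1, (fderiv ℝ f (L (t, y))) (y - x₀) =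
        ∑ i, (y i - x₀ i) * ∫ t in (0:ℝ)..1, h i (t, y) := by
      rw [show (fun t : ℝ => (fderiv ℝ f (L (t, y))) (y - x₀)) =
        fun t => ∑ i, (y i - x₀ i) * h i (t, y) from funext hexp]
      rw [intervalIntegral.integral_finset_sum]
      · exact Finset.sum_congr rfl fun i _ => intervalIntegral.integral_const_mul _ _
      · intro i _
        exact (continuous_const.mul ((hsmooth i).continuous.comp
          (continuous_id.prodMk continuous_const))).intervalIntegrable _ _
    have h2 : (∑ i, (y i - x₀ i) * ∫ t in (0:ℝ)..1, h i (t, y)) = f y - f x₀ := by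
      rw [← hint, hFTC, hφ1, hφ0]
    linarith

open MeasureTheory Metric
open scoped ContDiff

namespace Lemma311

variable {m : ℕ} {x₀ : Fin m → ℝ}

/-- algebraMap into the germ ring is the constant germ. -/
lemma germ_algebraMap_eq (x : Fin m → ℝ) (r : ℝ) :
    algebraMap ℝ (Filter.Germ (𝓝 x) ℝ) r
      = (↑(fun _ : Fin m → ℝ => r) : Filter.Germ (𝓝 x) ℝ) := by
  rw [Algebra.algebraMap_eq_smul_one]
  rw [show (1 : Filter.Germ (𝓝 x) ℝ)
    = (↑(fun _ : Fin m → ℝ => (1:ℝ)) : Filter.Germ (𝓝 x) ℝ) from rfl, ← Filter.Germ.coe_smul]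
  exact congrArg _ (funext fun z => by simp)

lemma value_coe (x : Fin m → ℝ) (f : (Fin m → ℝ) → ℝ) :
    (↑f : Filter.Germ (𝓝 x) ℝ).value = f x := rfl

lemma evalHom_coe (φ : SmoothGermAt m x₀) (f : (Fin m → ℝ) → ℝ)
    (h : (φ : Filter.Germ (𝓝 x₀) ℝ) = ↑f) :
    SmoothGermAt.evalHom m x₀ φ = f x₀ := by
  show ((φ : Filter.Germ (𝓝 x₀) ℝ)).value = f x₀
  rw [h]
  exact value_coe x₀ f

lemma evalHom_algebraMap (r : ℝ) :
    SmoothGermAt.evalHom m x₀ (algebraMap ℝ (SmoothGermAt m x₀) r) = r := by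
  refine evalHom_coe _ (fun _ => r) ?_
  rw [← germ_algebraMap_eq]
  rfl

lemma evalHom_coord (i : Fin m) :
    SmoothGermAt.evalHom m x₀ (coordFunGermAt m x₀ i) = x₀ i :=
  evalHom_coe _ (fun y => y i) rfl

/-- A germ with nonzero value is a unit. -/
lemma isUnit_of_evalHom_ne_zero (φ : SmoothGermAt m x₀)
    (hφ : SmoothGermAt.evalHom m x₀ φ ≠ 0) : IsUnit φ := by
  obtain ⟨f, ⟨U, hU, hxU, hf⟩, hval⟩ := φ.2
  have hfx : f x₀ ≠ 0 := by rwa [evalHom_coe φ f hval] at hφ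
  set V : Set (Fin m → ℝ) := U ∩ f ⁻¹' ({0}ᶜ) with hV
  have hVopen : IsOpen V :=
    hf.continuousOn.isOpen_inter_preimage hU isOpen_compl_singleton
  have hxV : x₀ ∈ V := ⟨hxU, hfx⟩
  have hinv : ContDiffOn ℝ (⊤:ℕ∞) (fun y => (f y)⁻¹) V := by
    refine (hf.mono Set.inter_subset_left).inv ?_
    intro y hy
    exact hy.2
  set ψ : SmoothGermAt m x₀ :=
    ⟨(↑(fun y => (f y)⁻¹) : Filter.Germ (𝓝 x₀) ℝ),
      ⟨fun y => (f y)⁻¹, ⟨V, hVopen, hxV, hinv⟩, rfl⟩⟩ with hψ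
  refine IsUnit.of_mul_eq_one (a := φ) ψ ?_
  apply Subtype.ext
  show (φ : Filter.Germ (𝓝 x₀) ℝ) * (↑(fun y => (f y)⁻¹) : Filter.Germ (𝓝 x₀) ℝ) = 1
  rw [hval, ← Filter.Germ.coe_mul,
    show (1 : Filter.Germ (𝓝 x₀) ℝ) = (↑(fun _ : Fin m → ℝ => (1:ℝ))) from rfl]
  rw [Filter.Germ.coe_eq]
  filter_upwards [hVopen.mem_nhds hxV] with y hy
  exact mul_inv_cancel₀ hy.2

/-- Any `ℝ`-algebra homomorphism to `ℝ` is given by evaluation. -/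
lemma algHom_eq_evalHom (χ : SmoothGermAt m x₀ →ₐ[ℝ] ℝ) (φ : SmoothGermAt m x₀) :
    χ φ = SmoothGermAt.evalHom m x₀ φ := by
  by_contra hne
  have h1 : SmoothGermAt.evalHom m x₀ (φ - algebraMap ℝ _ (χ φ)) ≠ 0 := by
    rw [map_sub, evalHom_algebraMap]
    exact sub_ne_zero.mpr (Ne.symm hne)
  have h2 := isUnit_of_evalHom_ne_zero _ h1
  have h3 := h2.map χ
  rw [map_sub, AlgHom.commutes, Algebra.algebraMap_self, RingHom.id_apply, sub_self] at h3
  exact not_isUnit_zero h3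

/-- The generators of the maximal ideal. -/
noncomputable def gens (m : ℕ) (x₀ : Fin m → ℝ) (i : Fin m) : SmoothGermAt m x₀ :=
  coordFunGermAt m x₀ i - algebraMap ℝ _ (x₀ i)

/-- The ideal generated by the coordinate germs minus their values. -/
noncomputable def KIdeal (m : ℕ) (x₀ : Fin m → ℝ) : Ideal (SmoothGermAt m x₀) :=
  Ideal.span (Set.range (gens m x₀))

lemma evalHom_gens (i : Fin m) : SmoothGermAt.evalHom m x₀ (gens m x₀ i) = 0 := by
  rw [gens, map_sub, evalHom_coord, evalHom_algebraMap, sub_self]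

lemma evalHom_eq_zero_of_mem_KIdeal {φ : SmoothGermAt m x₀} (h : φ ∈ KIdeal m x₀) :
    SmoothGermAt.evalHom m x₀ φ = 0 := by
  have : KIdeal m x₀ ≤ RingHom.ker (SmoothGermAt.evalHom m x₀) := by
    rw [KIdeal, Ideal.span_le]
    rintro _ ⟨i, rfl⟩
    exact evalHom_gens i
  exact this h

/-- germ-level Hadamard lemma -/
lemma hadamard_germ (φ : SmoothGermAt m x₀) :
    φ - algebraMap ℝ _ (SmoothGermAt.evalHom m x₀ φ) ∈ KIdeal m x₀ := by
  classical
  obtain ⟨f, ⟨U, hU, hxU, hf⟩, hval⟩ := φ.2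
  -- extend to a globally smooth function
  obtain ⟨r, hr0, hrU⟩ : ∃ r > 0, closedBall x₀ r ⊆ U := by
    obtain ⟨r, hr0, hrU⟩ := (Metric.nhds_basis_closedBall.mem_iff).mp (hU.mem_nhds hxU)
    exact ⟨r, hr0, hrU⟩
  set c : ContDiffBump x₀ := ⟨r/2, r, by positivity, by linarith⟩ with hc
  set ft : (Fin m → ℝ) → ℝ := fun y => c y * f y with hft
  have hsm : ContDiff ℝ ∞ ft := by
    rw [contDiff_iff_contDiffAt]
    intro y
    by_cases hy : y ∈ U
    · exact c.contDiffAt.mul ((hf.contDiffAt (hU.mem_nhds hy)))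
    · have hy2 : y ∈ (closedBall x₀ r)ᶜ := fun hmem => hy (hrU hmem)
      refine ContDiffAt.congr_of_eventuallyEq (contDiffAt_const (c := (0:ℝ))) ?_
      filter_upwards [isOpen_compl_iff.mpr Metric.isClosed_closedBall |>.mem_nhds hy2] with z hz
      have hz2 : z ∉ Metric.ball x₀ r := fun hb => hz (ball_subset_closedBall hb)
      have : c z = 0 := by
        rw [← Function.notMem_support, c.support_eq]
        exact hz2
      simp [hft, this]
  have hev : ft =ᶠ[𝓝 x₀] f := by
    filter_upwards [Metric.ball_mem_nhds x₀ (by positivity : (0:ℝ) < r/2)] with z hz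
    have : c z = 1 := c.one_of_mem_closedBall (ball_subset_closedBall hz)
    simp [hft, this]
  have hftx₀ : ft x₀ = f x₀ := hev.self_of_nhds
  obtain ⟨g, hg, hid⟩ := hadamard_global ft hsm x₀
  set G : Fin m → SmoothGermAt m x₀ := fun i =>
    ⟨(↑(g i) : Filter.Germ (𝓝 x₀) ℝ),
      ⟨g i, ⟨Set.univ, isOpen_univ, trivial, (hg i).contDiffOn⟩, rfl⟩⟩ with hG
  have heval : SmoothGermAt.evalHom m x₀ φ = f x₀ := evalHom_coe φ f hval
  have key : φ = algebraMap ℝ _ (f x₀) + ∑ i, gens m x₀ i * G i := by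
    apply Subtype.ext
    have hrhs : ((algebraMap ℝ (SmoothGermAt m x₀) (f x₀)
        + ∑ i, gens m x₀ i * G i : SmoothGermAt m x₀) : Filter.Germ (𝓝 x₀) ℝ)
        = ↑(fun y : Fin m → ℝ => f x₀ + ∑ i, (y i - x₀ i) * g i y) := by
      push_cast
      rw [germ_algebraMap_eq]
      have hterm : ∀ i : Fin m, ((gens m x₀ i : SmoothGermAt m x₀) : Filter.Germ (𝓝 x₀) ℝ)
            * (↑(g i) : Filter.Germ (𝓝 x₀) ℝ)
          = ↑(fun y : Fin m → ℝ => (y i - x₀ i) * g i y) := by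
        intro i
        rw [gens]
        push_cast
        rw [germ_algebraMap_eq]
        show ((↑(fun y : Fin m → ℝ => y i) - ↑(fun _ : Fin m → ℝ => x₀ i)
          : Filter.Germ (𝓝 x₀) ℝ)) * ↑(g i) = _
        rw [← Filter.Germ.coe_sub, ← Filter.Germ.coe_mul]
        rfl
      rw [Finset.sum_congr rfl (fun i _ => hterm i)]
      -- sum of coes is coe of sum
      have hsum : (∑ i : Fin m, (↑(fun y : Fin m → ℝ => (y i - x₀ i) * g i y)
          : Filter.Germ (𝓝 x₀) ℝ))
          = ↑(fun y : Fin m → ℝ => ∑ i, (y i - x₀ i) * g i y) := by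
        rw [show (fun y : Fin m → ℝ => ∑ i, (y i - x₀ i) * g i y)
          = ∑ i : Fin m, (fun y : Fin m → ℝ => (y i - x₀ i) * g i y) from ?_]
        · exact (map_sum (Filter.Germ.coeRingHom (𝓝 x₀)) _ _).symm
        · funext y
          simp
      rw [hsum, ← Filter.Germ.coe_add]
      rfl
    rw [hrhs, hval]
    have : f =ᶠ[𝓝 x₀] (fun y => f x₀ + ∑ i, (y i - x₀ i) * g i y) := by
      filter_upwards [hev] with z hz
      rw [← hz, hid z, hftx₀]
    exact Filter.Germ.coe_eq.mpr this
  rw [heval, key]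
  rw [add_sub_cancel_left]
  exact Submodule.sum_mem _ fun i _ =>
    Ideal.mul_mem_right _ _ (Ideal.subset_span ⟨i, rfl⟩)

/-- polynomial subalgebra -/
noncomputable def A0 (m : ℕ) (x₀ : Fin m → ℝ) : Subalgebra ℝ (SmoothGermAt m x₀) :=
  Algebra.adjoin ℝ (Set.range (coordFunGermAt m x₀))

lemma gens_mem_A0 (i : Fin m) : gens m x₀ i ∈ A0 m x₀ :=
  sub_mem (Algebra.subset_adjoin ⟨i, rfl⟩) (Subalgebra.algebraMap_mem _ _)

lemma main_approx : ∀ k : ℕ,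
    (∀ x : SmoothGermAt m x₀, x ∈ (KIdeal m x₀) ^ k →
      ∃ q ∈ A0 m x₀, x - q ∈ (KIdeal m x₀) ^ (k+1)) ∧
    (∀ φ : SmoothGermAt m x₀, ∃ p ∈ A0 m x₀, φ - p ∈ (KIdeal m x₀) ^ k) := by
  intro k
  induction k with
  | zero =>
    constructor
    · intro x _
      refine ⟨algebraMap ℝ _ (SmoothGermAt.evalHom m x₀ x),
        Subalgebra.algebraMap_mem _ _, ?_⟩
      rw [pow_one]
      exact hadamard_germ x
    · intro φ
      refine ⟨0, zero_mem _, ?_⟩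
      rw [pow_zero, Ideal.one_eq_top]
      exact Submodule.mem_top
  | succ k ih =>
    have T : ∀ φ : SmoothGermAt m x₀, ∃ p ∈ A0 m x₀, φ - p ∈ (KIdeal m x₀) ^ (k+1) := by
      intro φ
      obtain ⟨p, hp, hx⟩ := ih.2 φ
      obtain ⟨q, hq, hxq⟩ := ih.1 _ hx
      refine ⟨p + q, add_mem hp hq, ?_⟩
      rw [show φ - (p + q) = (φ - p) - q by ring]
      exact hxq
    refine ⟨?_, T⟩
    intro x hx
    rw [pow_succ] at hx
    refine Submodule.mul_induction_on hx ?_ ?_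
    · intro a ha b hb
      obtain ⟨q, hq, hr⟩ := ih.1 a ha
      obtain ⟨cfun, hc⟩ := (Ideal.mem_span_range_iff_exists_fun).mp hb
      choose pfun hp1 hp2 using fun i => T (cfun i * q)
      refine ⟨∑ i, pfun i * gens m x₀ i, ?_, ?_⟩
      · exact Subalgebra.sum_mem _ fun i _ => mul_mem (hp1 i) (gens_mem_A0 i)
      · have hq_b : q * b = ∑ i, (cfun i * q) * gens m x₀ i := by
          rw [← hc, Finset.mul_sum]
          exact Finset.sum_congr rfl fun i _ => by ring
        have hsplit : a * b - ∑ i, pfun i * gens m x₀ i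
            = (a - q) * b + ∑ i, ((cfun i * q - pfun i) * gens m x₀ i) := by
          have h6 : ∑ i, ((cfun i * q - pfun i) * gens m x₀ i)
              = q * b - ∑ i, pfun i * gens m x₀ i := by
            rw [hq_b, ← Finset.sum_sub_distrib]
            exact Finset.sum_congr rfl fun i _ => by ring
          rw [h6]
          ring
        rw [hsplit]
        refine Submodule.add_mem _ ?_ ?_
        · rw [pow_succ]
          exact Submodule.mul_mem_mul hr hb
        · refine Submodule.sum_mem _ fun i _ => ?_
          rw [pow_succ]
          exact Submodule.mul_mem_mul (hp2 i) (Ideal.subset_span ⟨i, rfl⟩)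
    · intro a b ha hb
      obtain ⟨q1, hq1, h1⟩ := ha
      obtain ⟨q2, hq2, h2⟩ := hb
      refine ⟨q1 + q2, add_mem hq1 hq2, ?_⟩
      rw [show a + b - (q1 + q2) = (a - q1) + (b - q2) by ring]
      exact Submodule.add_mem _ h1 h2

/-- Image of `K^k` under an algebra map to the Grassmann algebra. -/
lemma map_Kpow_mem {N : ℕ} (a : SmoothGermAt m x₀ →ₐ[ℝ] ExteriorAlgebra ℝ (Fin N → ℝ))
    (k : ℕ) (x : SmoothGermAt m x₀) (hx : x ∈ (KIdeal m x₀) ^ k) :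
    a x ∈ ((Wsub N) * (⊤ : Submodule ℝ (ExteriorAlgebra ℝ (Fin N → ℝ)))) ^ k
      * (⊤ : Submodule ℝ (ExteriorAlgebra ℝ (Fin N → ℝ))) := by
  refine Submodule.pow_induction_on_left' (M := KIdeal m x₀)
    (C := fun n z _ => a z ∈ ((Wsub N) * (⊤ : Submodule ℝ _)) ^ n
      * (⊤ : Submodule ℝ (ExteriorAlgebra ℝ (Fin N → ℝ)))) ?_ ?_ ?_ hx
  · intro r
    rw [pow_zero, Submodule.one_mul]
    exact Submodule.mem_top
  · intro z w i _ _ hz hw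
    rw [map_add]
    exact Submodule.add_mem _ hz hw
  · intro mm hmm i z hz ihz
    rw [map_mul, pow_succ', mul_assoc]
    refine Submodule.mul_mem_mul ?_ ihz
    -- a mm ∈ Wsub * ⊤ since ε (a mm) = 0
    have hψ : ExteriorAlgebra.algebraMapInv (a mm) = 0 := by
      have hcomp := algHom_eq_evalHom ((ExteriorAlgebra.algebraMapInv).comp a) mm
      rw [AlgHom.comp_apply] at hcomp
      rw [hcomp]
      exact evalHom_eq_zero_of_mem_KIdeal hmm
    have := sub_algebraMap_mem_J N (a mm)
    rwa [hψ, map_zero, sub_zero] at this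

end Lemma311

/-- **(Uniqueness in Lemma 3.11.)** Two `ℝ`-algebra homomorphisms from the algebra `C^∞_{x₀}`
of germs at `x₀ ∈ ℝ^m` of smooth real-valued functions to the Grassmann algebra
`λ_N = ExteriorAlgebra ℝ (Fin N → ℝ)` which agree on the germs of the `m` coordinate
functions `y ↦ y i` are equal. -/
theorem algHom_smoothGermAt_ext (m N : ℕ) (x₀ : Fin m → ℝ)
    (a b : SmoothGermAt m x₀ →ₐ[ℝ] ExteriorAlgebra ℝ (Fin N → ℝ))
    (h : ∀ i : Fin m, a (coordFunGermAt m x₀ i) = b (coordFunGermAt m x₀ i)) :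
    a = b := by
  apply AlgHom.ext
  intro φ
  obtain ⟨p, hp, hx⟩ := (Lemma311.main_approx (N + 1)).2 φ
  have hzero : ∀ c : SmoothGermAt m x₀ →ₐ[ℝ] ExteriorAlgebra ℝ (Fin N → ℝ),
      c (φ - p) = 0 := by
    intro c
    have h1 := Lemma311.map_Kpow_mem c (N + 1) _ hx
    rw [Jpow_bot, Submodule.bot_mul] at h1
    simpa using h1
  have hab : a p = b p := by
    refine Algebra.adjoin_induction ?_ ?_ ?_ ?_ hp
    · rintro _ ⟨i, rfl⟩
      exact h i
    · intro r
      rw [AlgHom.commutes, AlgHom.commutes]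
    · intro z w _ _ hz hw
      rw [map_add, map_add, hz, hw]
    · intro z w _ _ hz hw
      rw [map_mul, map_mul, hz, hw]
  have ha : a φ = a p := by
    have := hzero a
    rw [map_sub, sub_eq_zero] at this
    exact this
  have hb : b φ = b p := by
    have := hzero b
    rw [map_sub, sub_eq_zero] at this
    exact this
  rw [ha, hb, hab]
end ParamInt
end

section
/- Fix an open set U ⊆ ℝ^n and q ∈ ℕ, and let f be a C^∞ map from U to the Grassmann algebra λ_q. If for every y ∈ U the germ of f at y lies in m_y^{q+1}, the (q+1)-st power of the two-sided ideal m_y = {h ∈ A_y : ε(h(y)) = 0} of the algebra A_y of germs at y of smooth λ_q-valued maps, then f = 0 identically on U. -/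
set_option synthInstance.maxHeartbeats 1000000
set_option maxHeartbeats 1000000

open Filter Topology

/-- The Grassmann algebra `λ_q = R[θ_1, …, θ_q]` over `ℝ`. -/
abbrev GrassmannAlg (q : ℕ) : Type := ExteriorAlgebra ℝ (Fin q → ℝ)

section AuxAlgebra
open ExteriorAlgebra

noncomputable def augIdeal (q : ℕ) : Submodule ℝ (GrassmannAlg q) :=
  LinearMap.ker (ExteriorAlgebra.algebraMapInv (R := ℝ) (M := Fin q → ℝ)).toLinearMap

lemma mem_augIdeal {q : ℕ} {x : GrassmannAlg q} :
    x ∈ augIdeal q ↔ ExteriorAlgebra.algebraMapInv x = 0 := Iff.rfl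

lemma sub_mem_rangeMulTop {q : ℕ} (x : GrassmannAlg q) :
    x - algebraMap ℝ _ (ExteriorAlgebra.algebraMapInv x) ∈
      (LinearMap.range (ExteriorAlgebra.ι ℝ (M := Fin q → ℝ)) * ⊤ : Submodule ℝ (GrassmannAlg q)) := by
  set J : Submodule ℝ (GrassmannAlg q) := LinearMap.range (ExteriorAlgebra.ι ℝ (M := Fin q → ℝ))
  have hDT : (J * ⊤ : Submodule ℝ (GrassmannAlg q)) * ⊤ ≤ J * ⊤ := by
    rw [mul_assoc]
    exact mul_le_mul_right le_top _
  induction x using ExteriorAlgebra.induction with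
  | algebraMap r =>
      rw [ExteriorAlgebra.algebraMap_leftInverse _ r, sub_self]
      exact zero_mem _
  | ι v =>
      have h0 : ExteriorAlgebra.algebraMapInv (ι ℝ v) = (0 : ℝ) := by
        simp [ExteriorAlgebra.algebraMapInv]
      rw [h0, map_zero, sub_zero]
      have : ι ℝ v = ι ℝ v * 1 := (mul_one _).symm
      rw [this]
      exact Submodule.mul_mem_mul (LinearMap.mem_range_self _ v) trivial
  | mul a b ha hb =>
      have key : a * b - algebraMap ℝ _ (ExteriorAlgebra.algebraMapInv (a * b))
          = (a - algebraMap ℝ _ (ExteriorAlgebra.algebraMapInv a)) * b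
            + (ExteriorAlgebra.algebraMapInv a) •
              (b - algebraMap ℝ _ (ExteriorAlgebra.algebraMapInv b)) := by
        rw [map_mul, map_mul, Algebra.smul_def]
        noncomm_ring
      rw [key]
      exact add_mem (hDT (Submodule.mul_mem_mul ha trivial))
        (Submodule.smul_mem _ _ hb)
  | add a b ha hb =>
      have key : a + b - algebraMap ℝ _ (ExteriorAlgebra.algebraMapInv (a + b))
          = (a - algebraMap ℝ _ (ExteriorAlgebra.algebraMapInv a))
            + (b - algebraMap ℝ _ (ExteriorAlgebra.algebraMapInv b)) := by
        rw [map_add, map_add]; abel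
      rw [key]
      exact add_mem ha hb

lemma rangePow_eq_bot (q : ℕ) :
    (LinearMap.range (ExteriorAlgebra.ι ℝ (M := Fin q → ℝ)) ^ (q + 1) :
      Submodule ℝ (GrassmannAlg q)) = ⊥ := by
  show ⋀[ℝ]^(q+1) (Fin q → ℝ) = ⊥
  rw [← ExteriorAlgebra.ιMulti_span_fixedDegree, eq_bot_iff, Submodule.span_le]
  rintro _ ⟨v, rfl⟩
  have hdep : ¬ LinearIndependent ℝ v := by
    intro h
    have := h.fintype_card_le_finrank
    simp [Module.finrank_fin_fun] at this
  simp [AlternatingMap.map_linearDependent _ v hdep]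

lemma augIdeal_pow_le {q : ℕ} (m : ℕ) :
    (augIdeal q) ^ (m + 1)
      ≤ (LinearMap.range (ExteriorAlgebra.ι ℝ (M := Fin q → ℝ)) ^ (m + 1) : Submodule ℝ (GrassmannAlg q)) * ⊤ := by
  set J : Submodule ℝ (GrassmannAlg q) := LinearMap.range (ExteriorAlgebra.ι ℝ (M := Fin q → ℝ))
  have hI : augIdeal q ≤ J * ⊤ := by
    intro x hx
    have := sub_mem_rangeMulTop x
    rwa [mem_augIdeal.mp hx, map_zero, sub_zero] at this
  have hTI : (⊤ : Submodule ℝ (GrassmannAlg q)) * augIdeal q ≤ augIdeal q := by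
    rw [Submodule.mul_le]
    intro a _ b hb
    rw [mem_augIdeal, map_mul, mem_augIdeal.mp hb, mul_zero]
  induction m with
  | zero => simpa [pow_one] using hI
  | succ k ih =>
      calc augIdeal q ^ (k + 2) = augIdeal q ^ (k + 1) * augIdeal q := by rw [pow_succ]
        _ ≤ (J ^ (k + 1) * ⊤) * augIdeal q := mul_le_mul_left ih _
        _ = J ^ (k + 1) * (⊤ * augIdeal q) := by rw [mul_assoc]
        _ ≤ J ^ (k + 1) * augIdeal q := mul_le_mul_right hTI _
        _ ≤ J ^ (k + 1) * (J * ⊤) := mul_le_mul_right hI _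
        _ = J ^ (k + 2) * ⊤ := by rw [← mul_assoc, ← pow_succ]

lemma augIdeal_pow_eq_bot (q : ℕ) : (augIdeal q) ^ (q + 1) = ⊥ := by
  have := augIdeal_pow_le (q := q) q
  rw [rangePow_eq_bot, Submodule.bot_mul] at this
  exact le_bot_iff.mp this

end AuxAlgebra



/-- `f : ℝ^n → λ_q` is `C^∞` on `U`.  Since `λ_q` is a finite-dimensional real vector space
(of dimension `2 ^ q`), smoothness with respect to any norm on `λ_q` (all of which are
equivalent) amounts to the existence of a finite decomposition `f = ∑ j, g j • b j` with
`C^∞` real-valued coefficient functions `g j` and constant vectors `b j ∈ λ_q`;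
we take this as the definition. -/
def ContDiffOnG {n q : ℕ} (f : (Fin n → ℝ) → GrassmannAlg q) (U : Set (Fin n → ℝ)) : Prop :=
  ∃ (k : ℕ) (g : Fin k → (Fin n → ℝ) → ℝ) (b : Fin k → GrassmannAlg q),
    (∀ j, ContDiffOn ℝ (⊤ : ℕ∞) (g j) U) ∧ ∀ y ∈ U, f y = ∑ j, g j y • b j

theorem ContDiffOnG.mul {n q : ℕ} {f g : (Fin n → ℝ) → GrassmannAlg q}
    {U V : Set (Fin n → ℝ)} (hf : ContDiffOnG f U) (hg : ContDiffOnG g V) :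
    ContDiffOnG (f * g) (U ∩ V) := by
  obtain ⟨k₁, g₁, b₁, hg₁, hfd⟩ := hf
  obtain ⟨k₂, g₂, b₂, hg₂, hgd⟩ := hg
  refine ⟨k₁ * k₂,
    fun p y => g₁ (finProdFinEquiv.symm p).1 y * g₂ (finProdFinEquiv.symm p).2 y,
    fun p => b₁ (finProdFinEquiv.symm p).1 * b₂ (finProdFinEquiv.symm p).2, ?_, ?_⟩
  · intro p
    exact ((hg₁ _).mono Set.inter_subset_left).mul ((hg₂ _).mono Set.inter_subset_right)
  · intro y hy
    have key : ∀ pr : Fin k₁ × Fin k₂,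
        (g₁ pr.1 y • b₁ pr.1) * (g₂ pr.2 y • b₂ pr.2)
          = (g₁ pr.1 y * g₂ pr.2 y) • (b₁ pr.1 * b₂ pr.2) := by
      intro pr
      rw [smul_mul_assoc, mul_smul_comm, smul_smul]
    calc (f * g) y = f y * g y := rfl
      _ = (∑ j, g₁ j y • b₁ j) * (∑ j, g₂ j y • b₂ j) := by rw [hfd y hy.1, hgd y hy.2]
      _ = ∑ j : Fin k₁, ∑ j' : Fin k₂, (g₁ j y • b₁ j) * (g₂ j' y • b₂ j') :=
        Finset.sum_mul_sum _ _ _ _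
      _ = ∑ pr : Fin k₁ × Fin k₂, (g₁ pr.1 y • b₁ pr.1) * (g₂ pr.2 y • b₂ pr.2) :=
        (Fintype.sum_prod_type
          (fun pr : Fin k₁ × Fin k₂ => (g₁ pr.1 y • b₁ pr.1) * (g₂ pr.2 y • b₂ pr.2))).symm
      _ = ∑ pr : Fin k₁ × Fin k₂, (g₁ pr.1 y * g₂ pr.2 y) • (b₁ pr.1 * b₂ pr.2) :=
        Finset.sum_congr rfl fun pr _ => key pr
      _ = ∑ p : Fin (k₁ * k₂), (g₁ (finProdFinEquiv.symm p).1 y * g₂ (finProdFinEquiv.symm p).2 y)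
            • (b₁ (finProdFinEquiv.symm p).1 * b₂ (finProdFinEquiv.symm p).2) :=
        (Equiv.sum_comp finProdFinEquiv.symm fun pr =>
          (g₁ pr.1 y * g₂ pr.2 y) • (b₁ pr.1 * b₂ pr.2)).symm

theorem ContDiffOnG.add {n q : ℕ} {f g : (Fin n → ℝ) → GrassmannAlg q}
    {U V : Set (Fin n → ℝ)} (hf : ContDiffOnG f U) (hg : ContDiffOnG g V) :
    ContDiffOnG (f + g) (U ∩ V) := by
  obtain ⟨k₁, g₁, b₁, hg₁, hfd⟩ := hf
  obtain ⟨k₂, g₂, b₂, hg₂, hgd⟩ := hg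
  refine ⟨k₁ + k₂, Fin.append g₁ g₂, Fin.append b₁ b₂, ?_, ?_⟩
  · intro j
    refine Fin.addCases (fun i => ?_) (fun i => ?_) j
    · rw [Fin.append_left]
      exact (hg₁ i).mono Set.inter_subset_left
    · rw [Fin.append_right]
      exact (hg₂ i).mono Set.inter_subset_right
  · intro y hy
    rw [Pi.add_apply, hfd y hy.1, hgd y hy.2, Fin.sum_univ_add]
    congr 1
    · exact Finset.sum_congr rfl fun i _ => by rw [Fin.append_left, Fin.append_left]
    · exact Finset.sum_congr rfl fun i _ => by rw [Fin.append_right, Fin.append_right]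

theorem ContDiffOnG.const {n q : ℕ} (c : GrassmannAlg q) :
    ContDiffOnG (fun _ : Fin n → ℝ => c) Set.univ := by
  refine ⟨1, fun _ _ => 1, fun _ => c, fun _ => contDiffOn_const, fun y _ => ?_⟩
  simp

/-- `A_x`: the `ℝ`-algebra of germs at `x ∈ ℝ^n` of `C^∞` maps from open neighbourhoods of
`x` to the Grassmann algebra `λ_q`; this is the stalk at `x` of the structure sheaf
`C^∞ ⊗ ⋀ (ℝ^q)*` of a Berezin–Kostant–Leites superdomain. -/
noncomputable def SmoothGermAtG (n q : ℕ) (x : Fin n → ℝ) :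
    Subalgebra ℝ (Filter.Germ (𝓝 x) (GrassmannAlg q)) where
  carrier := {φ | ∃ f : (Fin n → ℝ) → GrassmannAlg q,
    (∃ U : Set (Fin n → ℝ), IsOpen U ∧ x ∈ U ∧ ContDiffOnG f U) ∧ φ = ↑f}
  mul_mem' := by
    rintro φ ψ ⟨f, ⟨U, hU, hxU, hf⟩, rfl⟩ ⟨g, ⟨V, hV, hxV, hg⟩, rfl⟩
    exact ⟨f * g, ⟨U ∩ V, hU.inter hV, ⟨hxU, hxV⟩, hf.mul hg⟩,
      (Filter.Germ.coe_mul f g).symm ▸ rfl⟩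
  add_mem' := by
    rintro φ ψ ⟨f, ⟨U, hU, hxU, hf⟩, rfl⟩ ⟨g, ⟨V, hV, hxV, hg⟩, rfl⟩
    exact ⟨f + g, ⟨U ∩ V, hU.inter hV, ⟨hxU, hxV⟩, hf.add hg⟩,
      (Filter.Germ.coe_add f g).symm ▸ rfl⟩
  algebraMap_mem' := by
    intro c
    refine ⟨fun _ => algebraMap ℝ (GrassmannAlg q) c,
      ⟨Set.univ, isOpen_univ, trivial, ContDiffOnG.const _⟩, ?_⟩
    show c • (1 : Filter.Germ (𝓝 x) (GrassmannAlg q)) = _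
    rw [show (1 : Filter.Germ (𝓝 x) (GrassmannAlg q))
        = ((fun _ => (1 : GrassmannAlg q)) : (Fin n → ℝ) → GrassmannAlg q) from rfl,
      ← Filter.Germ.coe_smul]
    exact congrArg _ (funext fun z => (Algebra.algebraMap_eq_smul_one c).symm)

/-- The two-sided ideal `m_x = {h ∈ A_x ∣ ε (h x) = 0}` of the algebra `A_x` of germs at `x`
of smooth `λ_q`-valued maps, as an `ℝ`-submodule of `A_x` (its powers, formed via the
product of submodules of the algebra `A_x`, coincide with the powers of the two-sided
ideal `m_x`). -/
noncomputable def mGSub (n q : ℕ) (x : Fin n → ℝ) : Submodule ℝ (SmoothGermAtG n q x) where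
  carrier := {h | ExteriorAlgebra.algebraMapInv
    (Filter.Germ.value (h : Filter.Germ (𝓝 x) (GrassmannAlg q))) = 0}
  zero_mem' := by
    show ExteriorAlgebra.algebraMapInv
      (Filter.Germ.value (0 : Filter.Germ (𝓝 x) (GrassmannAlg q))) = 0
    have h0 : Filter.Germ.value (0 : Filter.Germ (𝓝 x) (GrassmannAlg q)) = 0 := rfl
    rw [h0, map_zero]
  add_mem' := by
    intro a b ha hb
    show ExteriorAlgebra.algebraMapInv
      (Filter.Germ.value ((a : Filter.Germ (𝓝 x) (GrassmannAlg q))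
        + (b : Filter.Germ (𝓝 x) (GrassmannAlg q)))) = 0
    have : Filter.Germ.value ((a : Filter.Germ (𝓝 x) (GrassmannAlg q))
        + (b : Filter.Germ (𝓝 x) (GrassmannAlg q)))
        = Filter.Germ.value (a : Filter.Germ (𝓝 x) (GrassmannAlg q))
          + Filter.Germ.value (b : Filter.Germ (𝓝 x) (GrassmannAlg q)) :=
      map_add Filter.Germ.valueAddHom _ _
    rw [this, map_add, ha, hb, add_zero]
  smul_mem' := by
    intro r h hh
    show ExteriorAlgebra.algebraMapInv
      (Filter.Germ.value (r • (h : Filter.Germ (𝓝 x) (GrassmannAlg q)))) = 0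
    have : Filter.Germ.value (r • (h : Filter.Germ (𝓝 x) (GrassmannAlg q)))
        = r • Filter.Germ.value (h : Filter.Germ (𝓝 x) (GrassmannAlg q)) :=
      map_smul (Filter.Germ.valueₗ (𝕜 := ℝ)) r _
    rw [this, map_smul, hh, smul_zero]

/-- The germ at `x` of the scalar coordinate function `y ↦ (y i - x i) · 1`, as an element
of `A_x`. -/
noncomputable def evenCoordGermG (n q : ℕ) (x : Fin n → ℝ) (i : Fin n) :
    SmoothGermAtG n q x :=
  ⟨(↑(fun y : Fin n → ℝ => algebraMap ℝ (GrassmannAlg q) (y i - x i)) :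
      Filter.Germ (𝓝 x) (GrassmannAlg q)),
    ⟨fun y => algebraMap ℝ (GrassmannAlg q) (y i - x i),
      ⟨Set.univ, isOpen_univ, trivial,
        ⟨1, fun _ y => y i - x i, fun _ => 1,
          fun _ => ((ContinuousLinearMap.proj (R := ℝ) (φ := fun _ : Fin n => ℝ) i).contDiff.sub
            contDiff_const).contDiffOn,
          fun y _ => by simp [Algebra.algebraMap_eq_smul_one]⟩⟩, rfl⟩⟩

/-- The constant germ at `x` with value the odd generator `θ_j = ι (e j)`, as an element
of `A_x`. -/
noncomputable def oddCoordGermG (n q : ℕ) (x : Fin n → ℝ) (j : Fin q) :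
    SmoothGermAtG n q x :=
  ⟨(↑(fun _ : Fin n → ℝ => ExteriorAlgebra.ι ℝ (Pi.single j (1 : ℝ) : Fin q → ℝ)) :
      Filter.Germ (𝓝 x) (GrassmannAlg q)),
    ⟨fun _ => ExteriorAlgebra.ι ℝ (Pi.single j (1 : ℝ) : Fin q → ℝ),
      ⟨Set.univ, isOpen_univ, trivial, ContDiffOnG.const _⟩, rfl⟩⟩

/-- **(Lemma 3.14 (iii), specialized to `ℝ`.)** Let `U ⊆ ℝ^n` be open and `f : U → λ_q` a
`C^∞` map. If for every `y ∈ U` the germ of `f` at `y` lies in `m_y ^ (q + 1)`, the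
`(q+1)`-st power of the two-sided ideal `m_y = {h ∈ A_y ∣ ε (h y) = 0}` of the algebra
`A_y` of germs at `y` of smooth `λ_q`-valued maps, then `f = 0` identically on `U`. -/
theorem eq_zero_of_germ_mem_mG_pow (n q : ℕ) (U : Set (Fin n → ℝ)) (hU : IsOpen U)
    (f : (Fin n → ℝ) → GrassmannAlg q) (hf : ContDiffOnG f U)
    (h : ∀ y, ∀ hy : y ∈ U,
      (⟨(↑f : Filter.Germ (𝓝 y) (GrassmannAlg q)), f, ⟨U, hU, hy, hf⟩, rfl⟩ :
          SmoothGermAtG n q y) ∈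
        (mGSub n q y ^ (q + 1) : Submodule ℝ (SmoothGermAtG n q y))) :
    ∀ y ∈ U, f y = 0 := by
  intro y hy
  classical
  have key : ∀ (m : ℕ) (hh : SmoothGermAtG n q y), hh ∈ (mGSub n q y) ^ m →
      Filter.Germ.value ((hh : Filter.Germ (𝓝 y) (GrassmannAlg q))) ∈ (augIdeal q) ^ m := by
    intro m hh hm
    refine Submodule.pow_induction_on_left' (M := mGSub n q y)
      (C := fun i (x : SmoothGermAtG n q y) _ =>
        Filter.Germ.value ((x : Filter.Germ (𝓝 y) (GrassmannAlg q))) ∈ augIdeal q ^ i)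
      ?_ ?_ ?_ hm
    · intro r
      have hcoe : ((algebraMap ℝ (SmoothGermAtG n q y) r : SmoothGermAtG n q y) :
          Filter.Germ (𝓝 y) (GrassmannAlg q)) = r • (1 : Filter.Germ (𝓝 y) (GrassmannAlg q)) := by
        rw [← Algebra.algebraMap_eq_smul_one]
        rfl
      have hval : Filter.Germ.value
          ((algebraMap ℝ (SmoothGermAtG n q y) r : SmoothGermAtG n q y) :
            Filter.Germ (𝓝 y) (GrassmannAlg q)) = algebraMap ℝ (GrassmannAlg q) r := by
        rw [hcoe]
        have := map_smul (Filter.Germ.valueₗ (𝕜 := ℝ)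
          (E := GrassmannAlg q) (X := Fin n → ℝ) (x := y)) r
          (1 : Filter.Germ (𝓝 y) (GrassmannAlg q))
        rw [show Filter.Germ.value (r • (1 : Filter.Germ (𝓝 y) (GrassmannAlg q)))
            = r • Filter.Germ.value (1 : Filter.Germ (𝓝 y) (GrassmannAlg q)) from this]
        rw [Algebra.algebraMap_eq_smul_one]
        rfl
      rw [pow_zero, hval]
      exact Submodule.algebraMap_mem r
    · intro x₁ x₂ i hx₁ hx₂ c₁ c₂
      have hcoe : (((x₁ + x₂ : SmoothGermAtG n q y)) :
          Filter.Germ (𝓝 y) (GrassmannAlg q))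
          = (x₁ : Filter.Germ (𝓝 y) (GrassmannAlg q))
            + (x₂ : Filter.Germ (𝓝 y) (GrassmannAlg q)) := rfl
      have hval : Filter.Germ.value (((x₁ + x₂ : SmoothGermAtG n q y)) :
          Filter.Germ (𝓝 y) (GrassmannAlg q))
          = Filter.Germ.value ((x₁ : Filter.Germ (𝓝 y) (GrassmannAlg q)))
            + Filter.Germ.value ((x₂ : Filter.Germ (𝓝 y) (GrassmannAlg q))) := by
        rw [hcoe]
        exact map_add Filter.Germ.valueAddHom _ _
      rw [hval]
      exact add_mem c₁ c₂
    · intro g hg i x hx c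
      have hcoe : (((g * x : SmoothGermAtG n q y)) :
          Filter.Germ (𝓝 y) (GrassmannAlg q))
          = (g : Filter.Germ (𝓝 y) (GrassmannAlg q))
            * (x : Filter.Germ (𝓝 y) (GrassmannAlg q)) := rfl
      have hval : Filter.Germ.value (((g * x : SmoothGermAtG n q y)) :
          Filter.Germ (𝓝 y) (GrassmannAlg q))
          = Filter.Germ.value ((g : Filter.Germ (𝓝 y) (GrassmannAlg q)))
            * Filter.Germ.value ((x : Filter.Germ (𝓝 y) (GrassmannAlg q))) := by
        rw [hcoe]
        exact map_mul Filter.Germ.valueMulHom _ _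
      have hgI : Filter.Germ.value ((g : Filter.Germ (𝓝 y) (GrassmannAlg q))) ∈ augIdeal q :=
        hg
      rw [hval, pow_succ']
      exact Submodule.mul_mem_mul hgI c
  have hmem := key (q + 1) _ (h y hy)
  rw [augIdeal_pow_eq_bot, Submodule.mem_bot] at hmem
  exact hmem
end

section
/- Fix an open set U ⊆ ℝ^n and q ∈ ℕ, and let x ∈ U. The two-sided ideal m_x = {h ∈ A_x : ε(h(x)) = 0} of the algebra A_x of germs at x of smooth λ_q-valued maps is generated, as a two-sided ideal, by the germs at x of the scalar coordinate functions y ↦ (y_i − x_i)·1 (i = 1, …, n) together with the constant germs with value ι(e_j) (j = 1, …, q), where ι : ℝ^q → λ_q is the canonical embedding and e_1, …, e_q is the standard basis of ℝ^q. -/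
set_option synthInstance.maxHeartbeats 1000000
set_option maxHeartbeats 1000000

open Filter Topology
section AnalysisAux
open MeasureTheory intervalIntegral

theorem contDiff_parametric_integral_aux {H : Type} [NormedAddCommGroup H] [NormedSpace ℝ H]
    [ProperSpace H] (m : ℕ) :
    ∀ {E : Type} [NormedAddCommGroup E] [NormedSpace ℝ E] [CompleteSpace E]
      (F : ℝ × H → E), ContDiff ℝ (⊤ : ℕ∞) F →
      ContDiff ℝ (m : ℕ∞) (fun y : H => ∫ t in (0:ℝ)..1, F (t, y)) := by
  induction m with
  | zero =>
    intro E _ _ _ F hF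
    have : Continuous (fun y : H => ∫ t in (0:ℝ)..1, F (t, y)) :=
      continuous_parametric_intervalIntegral_of_continuous'
      (μ := volume) (f := fun y t => F (t, y)) (hF.continuous.comp continuous_swap) 0 1
    exact_mod_cast contDiff_zero.2 this
  | succ m ih =>
    intro E _ _ _ F hF
    set F' : ℝ × H → (H →L[ℝ] E) := fun p => (fderiv ℝ F p).comp (ContinuousLinearMap.inr ℝ ℝ H)
      with hF'def
    have hF'cont : ContDiff ℝ ((⊤:ℕ∞) : WithTop ℕ∞) F' :=
      (((ContinuousLinearMap.compL ℝ H (ℝ × H) E).flip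
        (ContinuousLinearMap.inr ℝ ℝ H)).contDiff).comp (hF.fderiv_right (by exact_mod_cast le_top : ((⊤:ℕ∞) : WithTop ℕ∞) + 1 ≤ ((⊤:ℕ∞) : WithTop ℕ∞)))
    have key : ∀ y₀ : H, HasFDerivAt (fun y : H => ∫ t in (0:ℝ)..1, F (t, y))
        (∫ t in (0:ℝ)..1, F' (t, y₀)) y₀ := by
      intro y₀
      obtain ⟨C, hC⟩ := ((isCompact_Icc (a := (0:ℝ)) (b := 1)).prod
        (isCompact_closedBall y₀ 1)).exists_bound_of_continuousOn hF'cont.continuous.continuousOn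
      have hdiff : ∀ t : ℝ, ∀ y : H, HasFDerivAt (fun y => F (t, y)) (F' (t, y)) y := by
        intro t y
        have h1 : HasFDerivAt (fun y : H => ((t : ℝ), y)) (ContinuousLinearMap.inr ℝ ℝ H) y :=
          hasFDerivAt_prodMk_right t y
        exact ((hF.differentiable (by simp) (t, y)).hasFDerivAt).comp y h1
      refine intervalIntegral.hasFDerivAt_integral_of_dominated_of_fderiv_le (𝕜 := ℝ)
        (F := fun y t => F (t, y)) (F' := fun y t => F' (t, y)) (bound := fun _ => C)
        (Metric.ball_mem_nhds y₀ one_pos) ?_ ?_ ?_ ?_ ?_ ?_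
      · exact Eventually.of_forall fun y =>
          (hF.continuous.comp (continuous_id.prodMk continuous_const)).aestronglyMeasurable
      · exact (hF.continuous.comp (continuous_id.prodMk continuous_const)).intervalIntegrable _ _
      · exact (hF'cont.continuous.comp (continuous_id.prodMk continuous_const)).aestronglyMeasurable
      · refine Eventually.of_forall fun t ht y hy => hC (t, y) ⟨?_, Metric.ball_subset_closedBall hy⟩
        rw [Set.uIoc_of_le zero_le_one] at ht
        exact ⟨ht.1.le, ht.2⟩
      · exact intervalIntegrable_const
      · exact Eventually.of_forall fun t ht y hy => hdiff t y
    have hfd : (fderiv ℝ fun y : H => ∫ t in (0:ℝ)..1, F (t, y))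
        = fun y => ∫ t in (0:ℝ)..1, F' (t, y) := funext fun y => (key y).fderiv
    have goal' : ContDiff ℝ ((m : WithTop ℕ∞) + 1) (fun y : H => ∫ t in (0:ℝ)..1, F (t, y)) := by
      refine contDiff_succ_iff_fderiv.2 ⟨fun y => (key y).differentiableAt, by simp, ?_⟩
      rw [hfd]
      exact_mod_cast ih F' hF'cont
    exact_mod_cast goal'

theorem ftc_line {n : ℕ} {c : (Fin n → ℝ) → ℝ} (hc : ContDiff ℝ (⊤:ℕ∞) c)
    (x y : Fin n → ℝ) :
    c y - c x = ∑ i, (y i - x i) *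
      ∫ t in (0:ℝ)..1, fderiv ℝ c (x + t • (y - x)) (Pi.single i 1) := by
  have hdiff : ∀ t : ℝ, HasDerivAt (fun t : ℝ => c (x + t • (y - x)))
      (fderiv ℝ c (x + t • (y - x)) (y - x)) t := by
    intro t
    have h1 : HasDerivAt (fun t : ℝ => x + t • (y - x)) (y - x) t := by
      simpa using ((hasDerivAt_id t).smul_const (y - x)).const_add x
    exact ((hc.differentiable (by simp) (x + t • (y - x))).hasFDerivAt).comp_hasDerivAt t h1
  have hcont : Continuous fun t : ℝ => fderiv ℝ c (x + t • (y - x)) (y - x) := by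
    have h1 : Continuous fun t : ℝ => x + t • (y - x) := by fun_prop
    have h2 : Continuous (fderiv ℝ c) :=
      (hc.fderiv_right (by exact_mod_cast le_top :
        ((⊤:ℕ∞) : WithTop ℕ∞) + 1 ≤ ((⊤:ℕ∞) : WithTop ℕ∞))).continuous
    exact (ContinuousLinearMap.apply ℝ ℝ (y - x)).continuous.comp (h2.comp h1)
  have key : c y - c x = ∫ t in (0:ℝ)..1, fderiv ℝ c (x + t • (y - x)) (y - x) := by
    have := intervalIntegral.integral_eq_sub_of_hasDerivAt
      (f := fun t : ℝ => c (x + t • (y - x))) (fun t _ => hdiff t)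
      (hcont.intervalIntegrable 0 1)
    simpa using this.symm
  rw [key]
  have hyx : ∀ z, fderiv ℝ c z (y - x) = ∑ i, (y i - x i) * fderiv ℝ c z (Pi.single i 1) := by
    intro z
    have : (y - x) = ∑ i, (y i - x i) • (Pi.single i 1 : Fin n → ℝ) := by
      funext j
      simp [Finset.sum_apply, Pi.single_apply, mul_ite, Finset.sum_ite_eq]
    rw [this, map_sum]
    simp [smul_eq_mul]
  simp_rw [hyx]
  rw [intervalIntegral.integral_finset_sum]
  · refine Finset.sum_congr rfl fun i _ => ?_
    rw [intervalIntegral.integral_const_mul]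
  · intro i _
    have h2 : Continuous (fderiv ℝ c) :=
      (hc.fderiv_right (by exact_mod_cast le_top :
        ((⊤:ℕ∞) : WithTop ℕ∞) + 1 ≤ ((⊤:ℕ∞) : WithTop ℕ∞))).continuous
    exact (continuous_const.mul ((ContinuousLinearMap.apply ℝ ℝ (Pi.single i 1)).continuous.comp
      (h2.comp (by fun_prop)))).intervalIntegrable 0 1

theorem smooth_extend {n : ℕ} {c : (Fin n → ℝ) → ℝ} {U : Set (Fin n → ℝ)}
    (hU : IsOpen U) {x : Fin n → ℝ} (hx : x ∈ U) (hc : ContDiffOn ℝ (⊤:ℕ∞) c U) :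
    ∃ c' : (Fin n → ℝ) → ℝ, ContDiff ℝ (⊤:ℕ∞) c' ∧ c' =ᶠ[𝓝 x] c := by
  obtain ⟨ε, hε, hball⟩ := Metric.isOpen_iff.1 hU x hx
  have hcb : Metric.closedBall x (ε/2) ⊆ U :=
    (Metric.closedBall_subset_ball (by linarith)).trans hball
  set φ : ContDiffBump x := ⟨ε/4, ε/2, by linarith, by linarith⟩
  classical
  set c₀ : (Fin n → ℝ) → ℝ := fun y => if y ∈ U then c y else 0 with hc₀
  refine ⟨fun y => φ y * c₀ y, ?_, ?_⟩
  · rw [contDiff_iff_contDiffAt]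
    intro y
    by_cases hy : y ∈ U
    · have h1 : ContDiffAt ℝ (⊤:ℕ∞) c₀ y := by
        refine (hc.congr fun z hz => ?_).contDiffAt (hU.mem_nhds hy)
        simp [hc₀, hz]
      exact φ.contDiff.contDiffAt.mul h1
    · have hyn : y ∉ Metric.closedBall x (ε/2) := fun h => hy (hcb h)
      have : ∀ᶠ z in 𝓝 y, φ z * c₀ z = 0 := by
        have hop : IsOpen (Metric.closedBall x (ε/2))ᶜ := (Metric.isClosed_closedBall).isOpen_compl
        filter_upwards [hop.mem_nhds hyn] with z hz
        have : φ z = 0 := by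
          apply φ.zero_of_le_dist
          have := Metric.mem_closedBall.not.1 hz
          push_neg at this
          exact this.le
        rw [this, zero_mul]
      exact (contDiffAt_const (c := (0:ℝ))).congr_of_eventuallyEq this
  · have : ∀ᶠ y in 𝓝 x, y ∈ Metric.ball x (ε/4) :=
      Metric.ball_mem_nhds x (by linarith)
    filter_upwards [this] with y hy
    have h1 : φ y = 1 := φ.one_of_mem_closedBall (Metric.ball_subset_closedBall hy)
    have h2 : y ∈ U := hball (Metric.ball_subset_ball (by linarith) hy)
    simp [h1, hc₀, h2]

theorem hadamard {n : ℕ} {c : (Fin n → ℝ) → ℝ} {U : Set (Fin n → ℝ)}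
    (hU : IsOpen U) {x : Fin n → ℝ} (hx : x ∈ U) (hc : ContDiffOn ℝ (⊤:ℕ∞) c U)
    (hcx : c x = 0) :
    ∃ d : Fin n → (Fin n → ℝ) → ℝ, (∀ i, ContDiff ℝ (⊤:ℕ∞) (d i)) ∧
      ∀ᶠ y in 𝓝 x, c y = ∑ i, (y i - x i) * d i y := by
  obtain ⟨c', hc', hcc⟩ := smooth_extend hU hx hc
  refine ⟨fun i y => ∫ t in (0:ℝ)..1, fderiv ℝ c' (x + t • (y - x)) (Pi.single i 1), ?_, ?_⟩
  · intro i
    have hFs : ContDiff ℝ (⊤:ℕ∞) (fun p : ℝ × (Fin n → ℝ) =>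
        fderiv ℝ c' (x + p.1 • (p.2 - x)) (Pi.single i 1)) := by
      have h2 : ContDiff ℝ (⊤:ℕ∞) (fderiv ℝ c') :=
        hc'.fderiv_right (by exact_mod_cast le_top :
          ((⊤:ℕ∞) : WithTop ℕ∞) + 1 ≤ ((⊤:ℕ∞) : WithTop ℕ∞))
      have h1 : ContDiff ℝ (⊤:ℕ∞) (fun p : ℝ × (Fin n → ℝ) => x + p.1 • (p.2 - x)) := by
        exact contDiff_const.add (contDiff_fst.smul (contDiff_snd.sub contDiff_const))
      exact (ContinuousLinearMap.apply ℝ ℝ (Pi.single i 1)).contDiff.comp (h2.comp h1)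
    rw [contDiff_infty]
    intro m
    exact_mod_cast contDiff_parametric_integral_aux m _ hFs
  · have hev : c' =ᶠ[𝓝 x] c := hcc
    filter_upwards [hev, hev.eventually_nhds] with y hy _
    have := ftc_line hc' x y
    rw [show c' x = 0 from hcc.self_of_nhds.trans hcx, sub_zero] at this
    rw [← hy, this]

end AnalysisAux

section GermAux

theorem Filter.Germ.coe_sum'' {α M : Type*} {l : Filter α} [AddCommMonoid M] {ι : Type*}
    (s : Finset ι) (f : ι → α → M) :
    ((↑(fun y => ∑ j ∈ s, f j y) : Filter.Germ l M)) = ∑ j ∈ s, (↑(f j) : Filter.Germ l M) := by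
  classical
  induction s using Finset.induction with
  | empty => simp; rfl
  | insert _ _ hji ih =>
    rw [Finset.sum_insert hji, ← ih, ← Filter.Germ.coe_add]
    exact congrArg _ (funext fun y => by rw [Pi.add_apply, Finset.sum_insert hji])

/-- The constant-germ map as an algebra homomorphism `λ_q →ₐ[ℝ] A_x`. -/
noncomputable def constGermGHom (n q : ℕ) (x : Fin n → ℝ) :
    GrassmannAlg q →ₐ[ℝ] SmoothGermAtG n q x where
  toFun b := ⟨(↑(fun _ : Fin n → ℝ => b) : Filter.Germ (𝓝 x) (GrassmannAlg q)),
    ⟨fun _ => b, ⟨Set.univ, isOpen_univ, trivial, ContDiffOnG.const _⟩, rfl⟩⟩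
  map_one' := rfl
  map_mul' a b := rfl
  map_zero' := rfl
  map_add' a b := rfl
  commutes' r := Subtype.ext <| by
    show (↑(fun _ : Fin n → ℝ => algebraMap ℝ (GrassmannAlg q) r) : Filter.Germ (𝓝 x) _)
        = r • (1 : Filter.Germ (𝓝 x) (GrassmannAlg q))
    rw [show (1 : Filter.Germ (𝓝 x) (GrassmannAlg q))
        = ((fun _ => (1 : GrassmannAlg q)) : (Fin n → ℝ) → GrassmannAlg q) from rfl,
      ← Filter.Germ.coe_smul]
    exact congrArg _ (funext fun z => (Algebra.algebraMap_eq_smul_one r))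

/-- The germ at `x` of a function `y ↦ g y · 1` with `g` real-valued and smooth near `x`,
as an element of `A_x`. -/
noncomputable def scalGermG (n q : ℕ) (x : Fin n → ℝ) (g : (Fin n → ℝ) → ℝ)
    (V : Set (Fin n → ℝ)) (hV : IsOpen V) (hxV : x ∈ V) (hg : ContDiffOn ℝ (⊤:ℕ∞) g V) :
    SmoothGermAtG n q x :=
  ⟨(↑(fun y : Fin n → ℝ => algebraMap ℝ (GrassmannAlg q) (g y)) : Filter.Germ (𝓝 x) (GrassmannAlg q)),
    ⟨fun y => algebraMap ℝ (GrassmannAlg q) (g y),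
      ⟨V, hV, hxV, ⟨1, fun _ => g, fun _ => 1, fun _ => hg,
        fun y _ => by simp [Algebra.algebraMap_eq_smul_one]⟩⟩, rfl⟩⟩

theorem algebraMapInv_iota {q : ℕ} (v : Fin q → ℝ) :
    ExteriorAlgebra.algebraMapInv (ExteriorAlgebra.ι ℝ v) = (0:ℝ) := by
  simp [ExteriorAlgebra.algebraMapInv, ExteriorAlgebra.lift_ι_apply]

theorem iota_decomp {q : ℕ} (v : Fin q → ℝ) :
    ExteriorAlgebra.ι ℝ v
      = ∑ j, v j • ExteriorAlgebra.ι ℝ (Pi.single j 1 : Fin q → ℝ) := by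
  have hv : v = ∑ j, v j • (Pi.single j 1 : Fin q → ℝ) := by
    funext i
    simp [Finset.sum_apply, Pi.single_apply, mul_ite, Finset.sum_ite_eq]
  conv_lhs => rw [hv]
  rw [map_sum]
  simp

theorem smul_mem_twoSidedIdeal {A : Type*} [Ring A] [Algebra ℝ A]
    (J : TwoSidedIdeal A) (r : ℝ) {a : A} (ha : a ∈ J) : r • a ∈ J := by
  rw [Algebra.smul_def]
  exact J.mul_mem_left _ _ ha

theorem constG_sub_mem (n q : ℕ) (x : Fin n → ℝ) (b : GrassmannAlg q) :
    constGermGHom n q x b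
      - (ExteriorAlgebra.algebraMapInv b : ℝ) • (1 : SmoothGermAtG n q x) ∈
      (TwoSidedIdeal.span
        (Set.range (evenCoordGermG n q x) ∪ Set.range (oddCoordGermG n q x)) :
          TwoSidedIdeal (SmoothGermAtG n q x)) := by
  set J := (TwoSidedIdeal.span
    (Set.range (evenCoordGermG n q x) ∪ Set.range (oddCoordGermG n q x)) :
      TwoSidedIdeal (SmoothGermAtG n q x)) with hJ
  induction b using ExteriorAlgebra.induction with
  | algebraMap r =>
    rw [AlgHom.commutes, ExteriorAlgebra.algebraMap_leftInverse,
      ← Algebra.algebraMap_eq_smul_one, sub_self]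
    exact J.zero_mem
  | ι v =>
    rw [algebraMapInv_iota, zero_smul, sub_zero, iota_decomp, map_sum]
    refine TwoSidedIdeal.finsetSum_mem _ _ _ fun j _ => ?_
    rw [map_smul]
    refine smul_mem_twoSidedIdeal J _ ?_
    have : constGermGHom n q x (ExteriorAlgebra.ι ℝ (Pi.single j 1 : Fin q → ℝ))
        = oddCoordGermG n q x j := rfl
    rw [this]
    exact TwoSidedIdeal.subset_span (Or.inr ⟨j, rfl⟩)
  | mul a b ha hb =>
    have hmul : constGermGHom n q x (a * b)
        - (ExteriorAlgebra.algebraMapInv (a * b) : ℝ) • (1 : SmoothGermAtG n q x)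
        = (ExteriorAlgebra.algebraMapInv a : ℝ) •
            (constGermGHom n q x b
              - (ExteriorAlgebra.algebraMapInv b : ℝ) • (1 : SmoothGermAtG n q x))
          + (constGermGHom n q x a
              - (ExteriorAlgebra.algebraMapInv a : ℝ) • (1 : SmoothGermAtG n q x))
            * constGermGHom n q x b := by
      rw [map_mul, map_mul, smul_sub, sub_mul, smul_mul_assoc, one_mul, smul_smul]
      abel
    rw [hmul]
    exact J.add_mem (smul_mem_twoSidedIdeal J _ hb) (J.mul_mem_right _ _ ha)
  | add a b ha hb =>
    have hadd : constGermGHom n q x (a + b)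
        - (ExteriorAlgebra.algebraMapInv (a + b) : ℝ) • (1 : SmoothGermAtG n q x)
        = (constGermGHom n q x a
            - (ExteriorAlgebra.algebraMapInv a : ℝ) • (1 : SmoothGermAtG n q x))
          + (constGermGHom n q x b
            - (ExteriorAlgebra.algebraMapInv b : ℝ) • (1 : SmoothGermAtG n q x)) := by
      rw [map_add, map_add, add_smul]
      abel
    rw [hadd]
    exact J.add_mem ha hb

end GermAux

/-- **(Lemma 3.14 (i), specialized to `ℝ`.)** Let `U ⊆ ℝ^n` be open and `x ∈ U`. The
two-sided ideal `m_x = {h ∈ A_x ∣ ε (h x) = 0}` of the algebra `A_x` of germs at `x` of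
smooth `λ_q`-valued maps is generated, as a two-sided ideal, by the germs of the scalar
coordinate functions `y ↦ (y i - x i) · 1` together with the constant germs with value
`ι (e j)`. -/
theorem mG_eq_twoSidedSpan (n q : ℕ) (U : Set (Fin n → ℝ)) (hU : IsOpen U)
    (x : Fin n → ℝ) (hx : x ∈ U) :
    (mGSub n q x : Set (SmoothGermAtG n q x)) =
      (TwoSidedIdeal.span
        (Set.range (evenCoordGermG n q x) ∪ Set.range (oddCoordGermG n q x)) :
          TwoSidedIdeal (SmoothGermAtG n q x)) := by
  classical
  set J := (TwoSidedIdeal.span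
    (Set.range (evenCoordGermG n q x) ∪ Set.range (oddCoordGermG n q x)) :
      TwoSidedIdeal (SmoothGermAtG n q x)) with hJdef
  apply Set.Subset.antisymm
  · -- m_x ⊆ span
    intro h hmem
    have hmem' : ExteriorAlgebra.algebraMapInv
        ((h : Filter.Germ (𝓝 x) (GrassmannAlg q)).value) = 0 := hmem
    obtain ⟨f, ⟨V0, hV0, hxV0, k, g, b, hg, hfd⟩, hfeq⟩ := h.2
    set eb : Fin k → ℝ := fun j => ExteriorAlgebra.algebraMapInv (b j) with heb
    set c : (Fin n → ℝ) → ℝ := fun y => ∑ j, g j y * eb j with hcdef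
    have hc : ContDiffOn ℝ (⊤:ℕ∞) c V0 :=
      ContDiffOn.sum fun j _ => (hg j).mul contDiffOn_const
    have hvx : (h : Filter.Germ (𝓝 x) (GrassmannAlg q)).value = f x := by rw [hfeq]; rfl
    have hcx : c x = 0 := by
      have h1 : ExteriorAlgebra.algebraMapInv (f x) = c x := by
        rw [hfd x hxV0, map_sum]
        exact Finset.sum_congr rfl fun j _ => by rw [map_smul, smul_eq_mul]
      rw [← h1, ← hvx]
      exact hmem'
    obtain ⟨d, hd, hev⟩ := hadamard hV0 hxV0 hc hcx
    set E : SmoothGermAtG n q x := scalGermG n q x c V0 hV0 hxV0 hc with hEdef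
    set D : Fin n → SmoothGermAtG n q x :=
      fun i => scalGermG n q x (d i) Set.univ isOpen_univ trivial ((hd i).contDiffOn) with hDdef
    set sg : Fin k → SmoothGermAtG n q x :=
      fun j => scalGermG n q x (g j) V0 hV0 hxV0 (hg j) with hsgdef
    set N : Fin k → SmoothGermAtG n q x :=
      fun j => constGermGHom n q x (b j) - eb j • 1 with hNdef
    have hNmem : ∀ j, N j ∈ J := fun j => constG_sub_mem n q x (b j)
    -- E is in the span, by Hadamard's lemma
    have hEeq : E = ∑ i, evenCoordGermG n q x i * D i := by
      apply Subtype.ext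
      rw [AddSubmonoidClass.coe_finset_sum]
      have h1 : ∀ i : Fin n, ((evenCoordGermG n q x i * D i : SmoothGermAtG n q x) :
          Filter.Germ (𝓝 x) (GrassmannAlg q))
          = ↑(fun y : Fin n → ℝ => algebraMap ℝ (GrassmannAlg q) ((y i - x i) * d i y)) := by
        intro i
        rw [MulMemClass.coe_mul]
        show (↑(fun y : Fin n → ℝ => algebraMap ℝ (GrassmannAlg q) (y i - x i)) *
          ↑(fun y : Fin n → ℝ => algebraMap ℝ (GrassmannAlg q) (d i y)) : Filter.Germ (𝓝 x) (GrassmannAlg q)) = _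
        rw [← Filter.Germ.coe_mul]
        exact congrArg _ (funext fun y => by rw [Pi.mul_apply, map_mul])
      simp only [h1]
      rw [← Filter.Germ.coe_sum'']
      show (↑(fun y : Fin n → ℝ => algebraMap ℝ (GrassmannAlg q) (c y)) : Filter.Germ (𝓝 x) (GrassmannAlg q)) = _
      rw [Filter.Germ.coe_eq]
      filter_upwards [hev] with y hy
      rw [hy, map_sum]
    have hE : E ∈ J := by
      rw [hEeq]
      refine TwoSidedIdeal.finsetSum_mem _ _ _ fun i _ => ?_
      exact J.mul_mem_right _ _ (TwoSidedIdeal.subset_span (Or.inl ⟨i, rfl⟩))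
    -- the main decomposition h = E + ∑ j, sg j * N j
    have hmain : h = E + ∑ j, sg j * N j := by
      apply Subtype.ext
      rw [AddMemClass.coe_add, AddSubmonoidClass.coe_finset_sum]
      have h1 : ∀ j : Fin k, ((sg j * N j : SmoothGermAtG n q x) :
          Filter.Germ (𝓝 x) (GrassmannAlg q))
          = ↑(fun y : Fin n → ℝ => algebraMap ℝ (GrassmannAlg q) (g j y) *
              (b j - eb j • (1 : GrassmannAlg q))) := by
        intro j
        rw [MulMemClass.coe_mul]
        have h2 : ((N j : SmoothGermAtG n q x) : Filter.Germ (𝓝 x) (GrassmannAlg q))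
            = ↑(fun _ : Fin n → ℝ => b j - eb j • (1 : GrassmannAlg q)) := by
          rw [hNdef]
          show ((constGermGHom n q x (b j) - eb j • 1 : SmoothGermAtG n q x) :
            Filter.Germ (𝓝 x) (GrassmannAlg q)) = _
          rw [AddSubgroupClass.coe_sub, SetLike.val_smul]
          show (↑(fun _ : Fin n → ℝ => b j) : Filter.Germ (𝓝 x) (GrassmannAlg q))
              - eb j • (↑(fun _ : Fin n → ℝ => (1 : GrassmannAlg q)) : Filter.Germ (𝓝 x) (GrassmannAlg q)) = _
          rw [← Filter.Germ.coe_smul, ← Filter.Germ.coe_sub]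
          rfl
        rw [h2]
        show (↑(fun y : Fin n → ℝ => algebraMap ℝ (GrassmannAlg q) (g j y)) *
          ↑(fun _ : Fin n → ℝ => b j - eb j • (1 : GrassmannAlg q)) : Filter.Germ (𝓝 x) (GrassmannAlg q)) = _
        rw [← Filter.Germ.coe_mul]
        rfl
      simp only [h1]
      rw [← Filter.Germ.coe_sum'', hfeq]
      show _ = (↑(fun y : Fin n → ℝ => algebraMap ℝ (GrassmannAlg q) (c y)) : Filter.Germ (𝓝 x) (GrassmannAlg q)) + _
      rw [← Filter.Germ.coe_add, Filter.Germ.coe_eq]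
      filter_upwards [hV0.mem_nhds hxV0] with y hy
      rw [Pi.add_apply, hfd y hy]
      have hsm : ∀ (r : ℝ) (w : GrassmannAlg q),
          algebraMap ℝ (GrassmannAlg q) r * w = r • w := fun r w => (Algebra.smul_def r w).symm
      rw [hcdef]
      simp only [hsm, smul_sub, smul_smul, Algebra.algebraMap_eq_smul_one]
      rw [Finset.sum_smul, ← Finset.sum_add_distrib]
      refine Finset.sum_congr rfl fun j _ => ?_
      rw [smul_mul_assoc, one_mul]
      module
    rw [SetLike.mem_coe, hmain]
    exact J.add_mem hE (TwoSidedIdeal.finsetSum_mem _ _ _ fun j _ =>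
      J.mul_mem_left _ _ (hNmem j))
  · -- span ⊆ m_x
    intro h hmem
    rw [SetLike.mem_coe] at hmem
    set Φ : SmoothGermAtG n q x →+* ℝ :=
      ((ExteriorAlgebra.algebraMapInv (R := ℝ) (M := Fin q → ℝ)).toRingHom).comp
        (Filter.Germ.valueRingHom.comp (SmoothGermAtG n q x).val.toRingHom) with hΦ
    have hker : (Set.range (evenCoordGermG n q x) ∪ Set.range (oddCoordGermG n q x)) ⊆
        (TwoSidedIdeal.ker Φ : Set (SmoothGermAtG n q x)) := by
      rintro _ (⟨i, rfl⟩ | ⟨j, rfl⟩) <;> rw [SetLike.mem_coe, TwoSidedIdeal.mem_ker]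
      · show ExteriorAlgebra.algebraMapInv
          (algebraMap ℝ (GrassmannAlg q) (x i - x i)) = 0
        rw [sub_self, map_zero, map_zero]
      · exact algebraMapInv_iota _
    have := TwoSidedIdeal.mem_span_iff.1 hmem (TwoSidedIdeal.ker Φ) hker
    rw [TwoSidedIdeal.mem_ker] at this
    exact this
end
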